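/- arXiv:2503.10394 — 7 statements merged into one kernel-verified Lean document; each statement's English description precedes it below -/
import Mathlib

section
/- In M₂(α,β), for every integer k ≥ 1 the following identities hold: (1) X₂₂^k X₁₁ = X₁₁X₂₂^k + α⁻¹((αβ)^k − 1)·X₁₂X₂₁X₂₂^{k−1}; (2) X₂₂X₁₁^k = X₁₁^k X₂₂ + β(1 − (αβ)^{−k})·X₁₂X₂₁X₁₁^{k−1}. -/
noncomputable section

open MulOpposite

variable {K : Type*} [Field K]

/-- Defining relations of the two-parameter quantum matrix algebra `M₂(α,β)`.
Generators: `0 ↦ X₁₁`, `1 ↦ X₁₂`, `2 ↦ X₂₁`, `3 ↦ X₂₂`. -/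
inductive QMRel (α β : K) : FreeAlgebra K (Fin 4) → FreeAlgebra K (Fin 4) → Prop
  | r12_11 : QMRel α β (FreeAlgebra.ι K 1 * FreeAlgebra.ι K 0)
      (α • (FreeAlgebra.ι K 0 * FreeAlgebra.ι K 1))
  | r21_11 : QMRel α β (FreeAlgebra.ι K 2 * FreeAlgebra.ι K 0)
      (β • (FreeAlgebra.ι K 0 * FreeAlgebra.ι K 2))
  | r22_21 : QMRel α β (FreeAlgebra.ι K 3 * FreeAlgebra.ι K 2)
      (α • (FreeAlgebra.ι K 2 * FreeAlgebra.ι K 3))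
  | r22_12 : QMRel α β (FreeAlgebra.ι K 3 * FreeAlgebra.ι K 1)
      (β • (FreeAlgebra.ι K 1 * FreeAlgebra.ι K 3))
  | r21_12 : QMRel α β (FreeAlgebra.ι K 2 * FreeAlgebra.ι K 1)
      ((β * α⁻¹) • (FreeAlgebra.ι K 1 * FreeAlgebra.ι K 2))
  | r22_11 : QMRel α β (FreeAlgebra.ι K 3 * FreeAlgebra.ι K 0)
      (FreeAlgebra.ι K 0 * FreeAlgebra.ι K 3 + (β - α⁻¹) • (FreeAlgebra.ι K 1 * FreeAlgebra.ι K 2))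

/-- The two-parameter quantum matrix algebra `M₂(α,β)`. -/
abbrev QM (α β : K) : Type _ := RingQuot (QMRel α β)

def X11 (α β : K) : QM α β := RingQuot.mkAlgHom K (QMRel α β) (FreeAlgebra.ι K 0)
def X12 (α β : K) : QM α β := RingQuot.mkAlgHom K (QMRel α β) (FreeAlgebra.ι K 1)
def X21 (α β : K) : QM α β := RingQuot.mkAlgHom K (QMRel α β) (FreeAlgebra.ι K 2)
def X22 (α β : K) : QM α β := RingQuot.mkAlgHom K (QMRel α β) (FreeAlgebra.ι K 3)

/-- The quantum determinant `D = X₁₁X₂₂ − α⁻¹X₁₂X₂₁`. -/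
def Dq (α β : K) : QM α β := X11 α β * X22 α β - α⁻¹ • (X12 α β * X21 α β)

section Helpers

variable (α β : K)

lemma rel12_11 : X12 α β * X11 α β = α • (X11 α β * X12 α β) := by
  have h := RingQuot.mkAlgHom_rel K (QMRel.r12_11 (α := α) (β := β))
  simpa [X11, X12, map_mul, map_smul] using h

lemma rel21_11 : X21 α β * X11 α β = β • (X11 α β * X21 α β) := by
  have h := RingQuot.mkAlgHom_rel K (QMRel.r21_11 (α := α) (β := β))
  simpa [X11, X21, map_mul, map_smul] using h

lemma rel22_21 : X22 α β * X21 α β = α • (X21 α β * X22 α β) := by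
  have h := RingQuot.mkAlgHom_rel K (QMRel.r22_21 (α := α) (β := β))
  simpa [X21, X22, map_mul, map_smul] using h

lemma rel22_12 : X22 α β * X12 α β = β • (X12 α β * X22 α β) := by
  have h := RingQuot.mkAlgHom_rel K (QMRel.r22_12 (α := α) (β := β))
  simpa [X12, X22, map_mul, map_smul] using h

lemma rel22_11 : X22 α β * X11 α β =
    X11 α β * X22 α β + (β - α⁻¹) • (X12 α β * X21 α β) := by
  have h := RingQuot.mkAlgHom_rel K (QMRel.r22_11 (α := α) (β := β))
  simpa [X11, X12, X21, X22, map_mul, map_smul, map_add] using h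

-- primed (right-extended) versions
lemma rel22_11' (x : QM α β) : X22 α β * (X11 α β * x) =
    X11 α β * (X22 α β * x) + (β - α⁻¹) • (X12 α β * (X21 α β * x)) := by
  rw [← mul_assoc, rel22_11, add_mul, smul_mul_assoc, mul_assoc, mul_assoc]

lemma rel22_12' (x : QM α β) : X22 α β * (X12 α β * x) =
    β • (X12 α β * (X22 α β * x)) := by
  rw [← mul_assoc, rel22_12, smul_mul_assoc, mul_assoc]

lemma rel22_21' (x : QM α β) : X22 α β * (X21 α β * x) =
    α • (X21 α β * (X22 α β * x)) := by
  rw [← mul_assoc, rel22_21, smul_mul_assoc, mul_assoc]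

lemma rel12_11' (x : QM α β) : X12 α β * (X11 α β * x) =
    α • (X11 α β * (X12 α β * x)) := by
  rw [← mul_assoc, rel12_11, smul_mul_assoc, mul_assoc]

lemma rel21_11' (x : QM α β) : X21 α β * (X11 α β * x) =
    β • (X11 α β * (X21 α β * x)) := by
  rw [← mul_assoc, rel21_11, smul_mul_assoc, mul_assoc]

lemma bca (x : QM α β) : X12 α β * (X21 α β * (X11 α β * x)) =
    (α * β) • (X11 α β * (X12 α β * (X21 α β * x))) := by
  rw [rel21_11', mul_smul_comm, rel12_11', smul_smul, mul_comm β α]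

lemma a_pow_bc (hα : α ≠ 0) (hβ : β ≠ 0) (j : ℕ) :
    X11 α β ^ j * (X12 α β * X21 α β) =
      ((α * β) ^ j)⁻¹ • (X12 α β * (X21 α β * X11 α β ^ j)) := by
  induction j with
  | zero => simp
  | succ n ih =>
    have h1 : X11 α β ^ (n + 1) * (X12 α β * X21 α β)
        = X11 α β * (X11 α β ^ n * (X12 α β * X21 α β)) := by
      rw [pow_succ', mul_assoc]
    rw [h1, ih, mul_smul_comm]
    have h2 : X12 α β * (X21 α β * X11 α β ^ (n + 1))
        = X12 α β * (X21 α β * (X11 α β * X11 α β ^ n)) := by rw [pow_succ']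
    rw [h2, bca, smul_smul]
    have hαβ : ((α : K) * β) ^ n ≠ 0 := pow_ne_zero _ (mul_ne_zero hα hβ)
    have hαβ' : ((α : K) * β) ^ (n + 1) ≠ 0 := pow_ne_zero _ (mul_ne_zero hα hβ)
    match_scalars
    field_simp
    ring

lemma part1 (hα : α ≠ 0) (hβ : β ≠ 0) : ∀ k : ℕ, 1 ≤ k →
    X22 α β ^ k * X11 α β =
      X11 α β * X22 α β ^ k +
        (α⁻¹ * ((α * β) ^ k - 1)) • (X12 α β * X21 α β * X22 α β ^ (k - 1)) := by
  intro k hk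
  induction k, hk using Nat.le_induction with
  | base =>
    simp only [pow_one, Nat.sub_self, pow_zero, mul_one, rel22_11]
    match_scalars
    · norm_num
    · rw [mul_one, mul_one, mul_sub, mul_one, ← mul_assoc, inv_mul_cancel₀ hα, one_mul]
  | succ n hn ih =>
    obtain ⟨m, rfl⟩ : ∃ m, n = m + 1 := ⟨n - 1, by omega⟩
    have h1 : X22 α β ^ (m + 1 + 1) * X11 α β
        = X22 α β * (X22 α β ^ (m + 1) * X11 α β) := by
      rw [pow_succ', mul_assoc]
    rw [h1, ih]
    simp only [Nat.add_sub_cancel, mul_assoc, mul_add, mul_smul_comm,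
      rel22_11', rel22_12', rel22_21']
    simp only [← mul_assoc, ← pow_succ']
    simp only [mul_assoc]
    match_scalars
    · ring
    · have hαβ : (α : K) * β ≠ 0 := mul_ne_zero hα hβ
      field_simp
      ring

lemma part2 (hα : α ≠ 0) (hβ : β ≠ 0) : ∀ k : ℕ, 1 ≤ k →
    X22 α β * X11 α β ^ k =
      X11 α β ^ k * X22 α β +
        (β * (1 - ((α * β) ^ k)⁻¹)) • (X12 α β * X21 α β * X11 α β ^ (k - 1)) := by
  intro k hk
  induction k, hk using Nat.le_induction with
  | base =>
    simp only [pow_one, Nat.sub_self, pow_zero, mul_one, rel22_11]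
    match_scalars
    · norm_num
    · rw [mul_one, mul_one, mul_sub, mul_one, mul_inv, mul_comm α⁻¹ β⁻¹, ← mul_assoc,
        mul_inv_cancel₀ hβ, one_mul]
  | succ n hn ih =>
    obtain ⟨m, rfl⟩ : ∃ m, n = m + 1 := ⟨n - 1, by omega⟩
    have h1 : X22 α β * X11 α β ^ (m + 1 + 1)
        = (X22 α β * X11 α β ^ (m + 1)) * X11 α β := by
      rw [pow_succ, ← mul_assoc]
    rw [h1, ih, add_mul, smul_mul_assoc]
    simp only [Nat.add_sub_cancel]
    have h2 : X11 α β ^ (m + 1) * X22 α β * X11 α β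
        = X11 α β ^ (m + 1) * (X22 α β * X11 α β) := by rw [mul_assoc]
    rw [h2, rel22_11, mul_add, mul_smul_comm, ← mul_assoc, ← pow_succ,
      a_pow_bc α β hα hβ (m + 1)]
    have h3 : X12 α β * X21 α β * X11 α β ^ m * X11 α β
        = X12 α β * (X21 α β * X11 α β ^ (m + 1)) := by
      rw [mul_assoc, mul_assoc, ← pow_succ]
    rw [h3]
    have h4 : X12 α β * X21 α β * X11 α β ^ (m + 1)
        = X12 α β * (X21 α β * X11 α β ^ (m + 1)) := by
      simp [mul_assoc]
    rw [h4]
    match_scalars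
    · ring
    · have hαβ : (α : K) * β ≠ 0 := mul_ne_zero hα hβ
      have h5 : ((α : K) * β) ^ (m + 1) ≠ 0 := pow_ne_zero _ hαβ
      field_simp
      ring

end Helpers

/-- Lemma 2.2 of the paper. In `M₂(α,β)`, for every `k ≥ 1`:
(1) `X₂₂^k X₁₁ = X₁₁ X₂₂^k + α⁻¹((αβ)^k − 1) X₁₂X₂₁X₂₂^{k−1}`;
(2) `X₂₂ X₁₁^k = X₁₁^k X₂₂ + β(1 − (αβ)^{−k}) X₁₂X₂₁X₁₁^{k−1}`. -/
theorem stmt0 (α β : K) (hα : α ≠ 0) (hβ : β ≠ 0) (k : ℕ) (hk : 1 ≤ k) :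
    X22 α β ^ k * X11 α β =
      X11 α β * X22 α β ^ k +
        (α⁻¹ * ((α * β) ^ k - 1)) • (X12 α β * X21 α β * X22 α β ^ (k - 1)) ∧
    X22 α β * X11 α β ^ k =
      X11 α β ^ k * X22 α β +
        (β * (1 - ((α * β) ^ k)⁻¹)) • (X12 α β * X21 α β * X11 α β ^ (k - 1)) := by
  exact ⟨part1 α β hα hβ k hk, part2 α β hα hβ k hk⟩
end
end

section
/- If α and β are l-th roots of unity, i.e., α^l = β^l = 1 for some integer l ≥ 1, then the elements X₁₁^l, X₁₂^l, X₂₁^l and X₂₂^l lie in the center of M₂(α,β). -/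
noncomputable section

open MulOpposite

variable {K : Type*} [Field K]

/-- commuting with a power from one basic `q`-commutation relation. -/
lemma comm_pow {A : Type*} [Ring A] [Algebra K A] {x y : A} {c : K}
    (h : y * x = c • (x * y)) (n : ℕ) : y * x ^ n = c ^ n • (x ^ n * y) := by
  induction n with
  | zero => simp
  | succ n ih =>
    rw [pow_succ, ← mul_assoc, ih, smul_mul_assoc, mul_assoc, h, mul_smul_comm, smul_smul,
      pow_succ, mul_assoc]

/-- An element commuting with the four generators is central. -/
lemma mem_center_of_comm {α β : K} (x : QM α β)
    (h1 : X11 α β * x = x * X11 α β) (h2 : X12 α β * x = x * X12 α β)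
    (h3 : X21 α β * x = x * X21 α β) (h4 : X22 α β * x = x * X22 α β) :
    x ∈ Subalgebra.center K (QM α β) := by
  rw [Subalgebra.mem_center_iff]
  intro b
  obtain ⟨y, rfl⟩ := RingQuot.mkAlgHom_surjective K (QMRel α β) b
  induction y with
  | grade0 r => simp [Algebra.commutes]
  | grade1 i =>
    fin_cases i
    · exact h1
    · exact h2
    · exact h3
    · exact h4
  | mul a b ha hb =>
    rw [map_mul, mul_assoc, hb, ← mul_assoc, ha, mul_assoc]
  | add a b ha hb =>
    rw [map_add, add_mul, mul_add, ha, hb]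

/-- Corollary 2.3 of the paper. If `α^l = β^l = 1` for some `l ≥ 1`,
then `X₁₁^l, X₁₂^l, X₂₁^l, X₂₂^l` lie in the center of `M₂(α,β)`. -/
theorem stmt1 (α β : K) (l : ℕ) (hl : 1 ≤ l) (hα : α ^ l = 1) (hβ : β ^ l = 1) :
    X11 α β ^ l ∈ Subalgebra.center K (QM α β) ∧
    X12 α β ^ l ∈ Subalgebra.center K (QM α β) ∧
    X21 α β ^ l ∈ Subalgebra.center K (QM α β) ∧
    X22 α β ^ l ∈ Subalgebra.center K (QM α β) := by
  have hl0 : l ≠ 0 := by omega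
  have hα0 : α ≠ 0 := by rintro rfl; simp [zero_pow hl0] at hα
  have hβ0 : β ≠ 0 := by rintro rfl; simp [zero_pow hl0] at hβ
  set A := X11 α β with hA
  set B := X12 α β with hB
  set C := X21 α β with hC
  set D := X22 α β with hD
  have r1 : B * A = α • (A * B) := by
    simpa [X11, X12, A, B] using RingQuot.mkAlgHom_rel K (QMRel.r12_11 (α := α) (β := β))
  have r2 : C * A = β • (A * C) := by
    simpa [X11, X21, A, C] using RingQuot.mkAlgHom_rel K (QMRel.r21_11 (α := α) (β := β))
  have r3 : D * C = α • (C * D) := by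
    simpa [X21, X22, C, D] using RingQuot.mkAlgHom_rel K (QMRel.r22_21 (α := α) (β := β))
  have r4 : D * B = β • (B * D) := by
    simpa [X12, X22, B, D] using RingQuot.mkAlgHom_rel K (QMRel.r22_12 (α := α) (β := β))
  have r5 : C * B = (β * α⁻¹) • (B * C) := by
    simpa [X12, X21, B, C] using RingQuot.mkAlgHom_rel K (QMRel.r21_12 (α := α) (β := β))
  have r6 : D * A = A * D + (β - α⁻¹) • (B * C) := by
    simpa [X11, X12, X21, X22, A, B, C, D] using
      RingQuot.mkAlgHom_rel K (QMRel.r22_11 (α := α) (β := β))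
  -- reversed relations
  have r1' : A * B = α⁻¹ • (B * A) := by rw [r1, smul_smul, inv_mul_cancel₀ hα0, one_smul]
  have r2' : A * C = β⁻¹ • (C * A) := by rw [r2, smul_smul, inv_mul_cancel₀ hβ0, one_smul]
  have r3' : C * D = α⁻¹ • (D * C) := by rw [r3, smul_smul, inv_mul_cancel₀ hα0, one_smul]
  have r4' : B * D = β⁻¹ • (D * B) := by rw [r4, smul_smul, inv_mul_cancel₀ hβ0, one_smul]
  have r5' : B * C = (β * α⁻¹)⁻¹ • (C * B) := by
    rw [r5, smul_smul, inv_mul_cancel₀ (by simp [hα0, hβ0]), one_smul]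
  have hαl : (α⁻¹) ^ l = 1 := by rw [inv_pow, hα, inv_one]
  have hβl : (β⁻¹) ^ l = 1 := by rw [inv_pow, hβ, inv_one]
  set E : QM α β := B * C with hE
  set t : K := β - α⁻¹ with ht
  -- E q-commutes with A and D
  have hEA : E * A = (α * β) • (A * E) := by
    rw [hE, mul_assoc, r2, mul_smul_comm, ← mul_assoc, r1, smul_mul_assoc, smul_smul,
      mul_assoc, mul_comm β α]
  have hDE : D * E = (α * β) • (E * D) := by
    rw [hE, ← mul_assoc, r4, smul_mul_assoc, mul_assoc, r3, mul_smul_comm, smul_smul,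
      ← mul_assoc, mul_comm β α]
  -- the key coefficient vanishes
  have hts : t * (∑ k ∈ Finset.range l, (α * β) ^ k) = 0 := by
    rcases eq_or_ne (α * β) 1 with h1 | h1
    · have hb : β = α⁻¹ := eq_inv_of_mul_eq_one_right h1
      simp [ht, hb]
    · rw [geom_sum_eq h1, mul_pow, hα, hβ, one_mul, sub_self, zero_div, mul_zero]
  -- hard commutation: D with powers of A
  have keyA : ∀ n : ℕ, D * A ^ (n + 1) =
      A ^ (n + 1) * D + (t * ∑ k ∈ Finset.range (n + 1), (α * β) ^ k) • (A ^ n * E) := by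
    intro n
    induction n with
    | zero => simpa using r6
    | succ n ih =>
      calc D * A ^ (n + 2) = (D * A) * A ^ (n + 1) := by rw [mul_assoc, ← pow_succ']
        _ = (A * D) * A ^ (n + 1) + (t • E) * A ^ (n + 1) := by rw [r6, add_mul]
        _ = A * (D * A ^ (n + 1)) + t • (E * A ^ (n + 1)) := by
            rw [mul_assoc, smul_mul_assoc]
        _ = A * (A ^ (n + 1) * D + (t * ∑ k ∈ Finset.range (n + 1), (α * β) ^ k) •
              (A ^ n * E)) + t • ((α * β) ^ (n + 1) • (A ^ (n + 1) * E)) := by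
            rw [ih, comm_pow hEA]
        _ = A ^ (n + 2) * D +
            (t * ∑ k ∈ Finset.range (n + 2), (α * β) ^ k) • (A ^ (n + 1) * E) := by
            conv_rhs => rw [Finset.sum_range_succ]
            rw [mul_add, ← mul_assoc, ← pow_succ', mul_smul_comm, ← mul_assoc, ← pow_succ',
              smul_smul]
            module
  -- hard commutation: A with powers of D
  have keyD : ∀ n : ℕ, A * D ^ (n + 1) =
      D ^ (n + 1) * A - (t * ∑ k ∈ Finset.range (n + 1), (α * β) ^ k) • (E * D ^ n) := by
    intro n
    have r6' : A * D = D * A - t • E := by rw [r6]; abel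
    induction n with
    | zero => simpa using r6'
    | succ n ih =>
      calc A * D ^ (n + 2) = (A * D) * D ^ (n + 1) := by rw [mul_assoc, ← pow_succ']
        _ = (D * A) * D ^ (n + 1) - (t • E) * D ^ (n + 1) := by rw [r6', sub_mul]
        _ = D * (A * D ^ (n + 1)) - t • (E * D ^ (n + 1)) := by
            rw [mul_assoc, smul_mul_assoc]
        _ = D * (D ^ (n + 1) * A - (t * ∑ k ∈ Finset.range (n + 1), (α * β) ^ k) •
              (E * D ^ n)) - t • (E * D ^ (n + 1)) := by rw [ih]
        _ = D ^ (n + 2) * A - ((t * ∑ k ∈ Finset.range (n + 1), (α * β) ^ k) * (α * β)) •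
              (E * (D * D ^ n)) - t • (E * D ^ (n + 1)) := by
            rw [mul_sub, ← mul_assoc, ← pow_succ', mul_smul_comm, ← mul_assoc, hDE,
              smul_mul_assoc, smul_smul, mul_assoc E D]
        _ = D ^ (n + 2) * A -
            (t * ∑ k ∈ Finset.range (n + 2), (α * β) ^ k) • (E * D ^ (n + 1)) := by
            conv_rhs => rw [geom_sum_succ]
            rw [← pow_succ']
            module
  obtain ⟨m, rfl⟩ : ∃ m, l = m + 1 := ⟨l - 1, by omega⟩
  refine ⟨?_, ?_, ?_, ?_⟩
  · refine mem_center_of_comm _ ?_ ?_ ?_ ?_ <;> simp only [← hA, ← hB, ← hC, ← hD]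
    · exact ((Commute.refl A).pow_right _).eq
    · rw [comm_pow r1, hα, one_smul]
    · rw [comm_pow r2, hβ, one_smul]
    · rw [keyA, hts, zero_smul, add_zero]
  · refine mem_center_of_comm _ ?_ ?_ ?_ ?_ <;> simp only [← hA, ← hB, ← hC, ← hD]
    · rw [comm_pow r1', hαl, one_smul]
    · exact ((Commute.refl B).pow_right _).eq
    · rw [comm_pow r5, mul_pow, hβ, hαl, one_mul, one_smul]
    · rw [comm_pow r4, hβ, one_smul]
  · refine mem_center_of_comm _ ?_ ?_ ?_ ?_ <;> simp only [← hA, ← hB, ← hC, ← hD]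
    · rw [comm_pow r2', hβl, one_smul]
    · rw [comm_pow r5', mul_inv, inv_inv, mul_pow, hβl, hα, one_mul, one_smul]
    · exact ((Commute.refl C).pow_right _).eq
    · rw [comm_pow r3, hα, one_smul]
  · refine mem_center_of_comm _ ?_ ?_ ?_ ?_ <;> simp only [← hA, ← hB, ← hC, ← hD]
    · rw [keyD, hts, zero_smul, sub_zero]
    · rw [comm_pow r4', hβl, one_smul]
    · rw [comm_pow r3', hαl, one_smul]
    · exact ((Commute.refl D).pow_right _).eq
end
end

section
/- Assume ord(αβ) = ord(αβ⁻¹) = t. Then for every pair of nonnegative integers (a,b) satisfying α^aβ^b = 1 and α^bβ^a = 1, there exists an integer k with 0 ≤ k ≤ l/t − 1 such that a ≡ kt (mod l) and b ≡ kt (mod l). -/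
lemma stmt3_aux {K : Type*} [Field K] (α β : K) (hα : α ≠ 0) (hβ : β ≠ 0)
    (hoα : 0 < orderOf α) (hoβ : 0 < orderOf β)
    (ht : orderOf (α * β) = orderOf (α * β⁻¹))
    (a b : ℕ) (hba : b ≤ a) (h1 : α ^ a * β ^ b = 1) (h2 : α ^ b * β ^ a = 1) :
    ∃ k : ℕ,
      k ≤ Nat.lcm (orderOf α) (orderOf β) / orderOf (α * β) - 1 ∧
      a ≡ k * orderOf (α * β) [MOD Nat.lcm (orderOf α) (orderOf β)] ∧
      b ≡ k * orderOf (α * β) [MOD Nat.lcm (orderOf α) (orderOf β)] := by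
  set m := orderOf α with hm
  set n := orderOf β with hn
  set l := Nat.lcm m n with hl
  set t := orderOf (α * β) with htdef
  have hml : m ∣ l := Nat.dvd_lcm_left m n
  have hnl : n ∣ l := Nat.dvd_lcm_right m n
  have hl0 : 0 < l := Nat.pos_of_ne_zero (Nat.lcm_ne_zero (by omega) (by omega))
  have hαl : α ^ l = 1 := orderOf_dvd_iff_pow_eq_one.mp hml
  have hβl : β ^ l = 1 := orderOf_dvd_iff_pow_eq_one.mp hnl
  -- key: α^(a-b) = β^(a-b)
  have key : α ^ (a - b) = β ^ (a - b) := by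
    have hne : (α ^ b * β ^ b) ≠ 0 :=
      mul_ne_zero (pow_ne_zero _ hα) (pow_ne_zero _ hβ)
    apply mul_right_cancel₀ hne
    calc α ^ (a - b) * (α ^ b * β ^ b) = (α ^ (a - b) * α ^ b) * β ^ b := by ring
      _ = α ^ a * β ^ b := by rw [← pow_add, Nat.sub_add_cancel hba]
      _ = 1 := h1
      _ = α ^ b * β ^ a := h2.symm
      _ = α ^ b * (β ^ (a - b) * β ^ b) := by rw [← pow_add, Nat.sub_add_cancel hba]
      _ = β ^ (a - b) * (α ^ b * β ^ b) := by ring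
  -- t ∣ a - b
  have hT2 : t ∣ a - b := by
    rw [ht, orderOf_dvd_iff_pow_eq_one, mul_pow, inv_pow, key,
      mul_inv_cancel₀ (pow_ne_zero _ hβ)]
  -- t ∣ a + b
  have hT1 : t ∣ a + b := by
    rw [orderOf_dvd_iff_pow_eq_one]
    calc (α * β) ^ (a + b) = (α ^ a * β ^ b) * (α ^ b * β ^ a) := by ring
      _ = 1 := by rw [h1, h2, one_mul]
  -- t ∣ l
  have hT3 : t ∣ l := by
    rw [orderOf_dvd_iff_pow_eq_one, mul_pow, hαl, hβl, one_mul]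
  have ht0 : 0 < t := Nat.pos_of_dvd_of_pos hT3 hl0
  have hαβt : (α * β) ^ t = 1 := pow_orderOf_eq_one _
  have hαβ't : (α * β⁻¹) ^ t = 1 := by rw [ht]; exact pow_orderOf_eq_one _
  -- α^(2t) = 1, β^(2t) = 1
  have hα2t : α ^ (2 * t) = 1 := by
    have e : (α * β) * (α * β⁻¹) = α ^ 2 := by field_simp
    calc α ^ (2 * t) = ((α * β) * (α * β⁻¹)) ^ t := by rw [e, ← pow_mul]
      _ = (α * β) ^ t * (α * β⁻¹) ^ t := mul_pow _ _ _
      _ = 1 := by rw [hαβt, hαβ't, one_mul]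
  have hβ2t : β ^ (2 * t) = 1 := by
    have e : (α * β) * (α * β⁻¹)⁻¹ = β ^ 2 := by field_simp
    calc β ^ (2 * t) = ((α * β) * (α * β⁻¹)⁻¹) ^ t := by rw [e, ← pow_mul]
      _ = (α * β) ^ t * ((α * β⁻¹) ^ t)⁻¹ := by rw [mul_pow, inv_pow]
      _ = 1 := by rw [hαβt, hαβ't, inv_one, one_mul]
  -- l ∣ 2t
  have hT4 : l ∣ 2 * t :=
    Nat.lcm_dvd (orderOf_dvd_iff_pow_eq_one.mpr hα2t)
      (orderOf_dvd_iff_pow_eq_one.mpr hβ2t)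
  obtain ⟨c, hc⟩ := hT3
  have hc2 : c ∣ 2 := by
    have h' : t * c ∣ t * 2 := by rw [← hc, mul_comm t 2]; exact hT4
    exact (Nat.mul_dvd_mul_iff_left ht0).mp h'
  rcases (Nat.prime_two.eq_one_or_self_of_dvd c hc2) with hc1 | hc1
  · -- case l = t
    rw [hc1, mul_one] at hc
    have hlab : l ∣ a + b := hc ▸ hT1
    have hβab : β ^ (a + b) = 1 := orderOf_dvd_iff_pow_eq_one.mp (hnl.trans hlab)
    have hβab' : β ^ a * β ^ b = 1 := by rw [← pow_add]; exact hβab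
    have hinv : β ^ b = (β ^ a)⁻¹ := eq_inv_of_mul_eq_one_left
      (by rw [mul_comm]; exact hβab')
    have hαβ'a : (α * β⁻¹) ^ a = 1 := by
      rw [mul_pow, inv_pow, ← hinv]; exact h1
    have hta : t ∣ a := by
      rw [ht]; exact orderOf_dvd_iff_pow_eq_one.mpr hαβ'a
    have hla : l ∣ a := hc ▸ hta
    have hlb : l ∣ b := by
      have := Nat.dvd_sub hlab hla
      simpa using this
    refine ⟨0, Nat.zero_le _, ?_, ?_⟩
    · simpa using (Nat.modEq_zero_iff_dvd.mpr hla)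
    · simpa using (Nat.modEq_zero_iff_dvd.mpr hlb)
  · -- case l = 2t
    rw [hc1] at hc
    have hT3 : t ∣ l := ⟨2, hc⟩
    -- t is odd
    have htodd : ¬ 2 ∣ t := by
      intro h2t
      obtain ⟨s, hs⟩ := h2t
      have hs0 : s ≠ 0 := by omega
      have hst : s < t := by omega
      have hz2 : (α * β) ^ s * (α * β) ^ s = 1 := by
        rw [← pow_add]
        have : s + s = t := by omega
        rw [this]; exact hαβt
      have hz1 : (α * β) ^ s ≠ 1 := pow_ne_one_of_lt_orderOf hs0 hst
      have hz : (α * β) ^ s = -1 := by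
        rcases mul_self_eq_one_iff.mp hz2 with h' | h'
        · exact absurd h' hz1
        · exact h'
      have hw2 : (α * β⁻¹) ^ s * (α * β⁻¹) ^ s = 1 := by
        rw [← pow_add]
        have : s + s = t := by omega
        rw [this]; exact hαβ't
      have hw1 : (α * β⁻¹) ^ s ≠ 1 := by
        apply pow_ne_one_of_lt_orderOf hs0
        rw [← ht]; exact hst
      have hw : (α * β⁻¹) ^ s = -1 := by
        rcases mul_self_eq_one_iff.mp hw2 with h' | h'
        · exact absurd h' hw1
        · exact h'
      have hαt : α ^ t = 1 := by
        have e : (α * β) * (α * β⁻¹) = α ^ 2 := by field_simp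
        calc α ^ t = α ^ (2 * s) := by rw [hs]
          _ = ((α * β) * (α * β⁻¹)) ^ s := by rw [e, ← pow_mul]
          _ = (α * β) ^ s * (α * β⁻¹) ^ s := mul_pow _ _ _
          _ = 1 := by rw [hz, hw]; ring
      have hβt : β ^ t = 1 := by
        have e : (α * β) * (α * β⁻¹)⁻¹ = β ^ 2 := by field_simp
        calc β ^ t = β ^ (2 * s) := by rw [hs]
          _ = ((α * β) * (α * β⁻¹)⁻¹) ^ s := by rw [e, ← pow_mul]
          _ = (α * β) ^ s * ((α * β⁻¹) ^ s)⁻¹ := by rw [mul_pow, inv_pow]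
          _ = 1 := by rw [hz, hw]; ring
      have : l ∣ t := Nat.lcm_dvd (orderOf_dvd_iff_pow_eq_one.mpr hαt)
        (orderOf_dvd_iff_pow_eq_one.mpr hβt)
      have := Nat.le_of_dvd ht0 this
      omega
    -- α^t and β^t are ±1
    have hαpm : α ^ t = 1 ∨ α ^ t = -1 := by
      apply mul_self_eq_one_iff.mp
      rw [← pow_add]
      have : t + t = 2 * t := by omega
      rw [this]; exact hα2t
    have hβpm : β ^ t = 1 ∨ β ^ t = -1 := by
      apply mul_self_eq_one_iff.mp
      rw [← pow_add]
      have : t + t = 2 * t := by omega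
      rw [this]; exact hβ2t
    have hne : ¬ (α ^ t = 1 ∧ β ^ t = 1) := by
      rintro ⟨hA, hB⟩
      have : l ∣ t := Nat.lcm_dvd (orderOf_dvd_iff_pow_eq_one.mpr hA)
        (orderOf_dvd_iff_pow_eq_one.mpr hB)
      have := Nat.le_of_dvd ht0 this
      omega
    have h1t : (α ^ t) ^ a * (β ^ t) ^ b = 1 := by
      have := congrArg (· ^ t) h1
      simp only [mul_pow, one_pow, ← pow_mul] at this
      calc (α ^ t) ^ a * (β ^ t) ^ b = α ^ (a * t) * β ^ (b * t) := by
            rw [← pow_mul, ← pow_mul, mul_comm t a, mul_comm t b]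
        _ = 1 := this
    have h2t : (α ^ t) ^ b * (β ^ t) ^ a = 1 := by
      have := congrArg (· ^ t) h2
      simp only [mul_pow, one_pow, ← pow_mul] at this
      calc (α ^ t) ^ b * (β ^ t) ^ a = α ^ (b * t) * β ^ (a * t) := by
            rw [← pow_mul, ← pow_mul, mul_comm t b, mul_comm t a]
        _ = 1 := this
    have h2ab : 2 ∣ a + b := by
      have hneg : (α ^ t = 1 ∧ β ^ t = -1) ∨ (α ^ t = -1 ∧ β ^ t = 1) ∨
          (α ^ t = -1 ∧ β ^ t = -1) := by tauto
      have hm1 : (-1 : K) ≠ 1 := by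
        intro h'
        rcases hαpm with hA | hA <;> rcases hβpm with hB | hB
        · exact hne ⟨hA, hB⟩
        · exact hne ⟨hA, by rw [hB, h']⟩
        · exact hne ⟨by rw [hA, h'], hB⟩
        · exact hne ⟨by rw [hA, h'], by rw [hB, h']⟩
      rcases hneg with ⟨hA, hB⟩ | ⟨hA, hB⟩ | ⟨hA, hB⟩
      · rw [hA, hB, one_pow, one_mul] at h1t h2t
        have hb2 : Even b := (neg_one_pow_eq_one_iff_even hm1).mp h1t
        have ha2 : Even a := (neg_one_pow_eq_one_iff_even hm1).mp h2t
        rcases ha2 with ⟨x, hx⟩; rcases hb2 with ⟨y, hy⟩; omega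
      · rw [hA, hB, one_pow, mul_one] at h1t h2t
        have ha2 : Even a := (neg_one_pow_eq_one_iff_even hm1).mp h1t
        have hb2 : Even b := (neg_one_pow_eq_one_iff_even hm1).mp h2t
        rcases ha2 with ⟨x, hx⟩; rcases hb2 with ⟨y, hy⟩; omega
      · rw [hA, hB, ← pow_add] at h1t
        have hab2 : Even (a + b) := (neg_one_pow_eq_one_iff_even hm1).mp h1t
        rcases hab2 with ⟨x, hx⟩; omega
    -- t ∣ a and t ∣ b, l ∣ a - b
    have hcop : Nat.Coprime t 2 :=
      ((Nat.prime_two.coprime_iff_not_dvd).mpr htodd).symm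
    have h2a : t ∣ 2 * a := by
      have := Nat.dvd_add hT1 hT2
      have e : (a + b) + (a - b) = 2 * a := by omega
      rwa [e] at this
    have hta : t ∣ a := by
      have := hcop.dvd_of_dvd_mul_right (by rwa [mul_comm] at h2a : t ∣ a * 2)
      exact this
    have h2ab' : 2 ∣ a - b := by omega
    have hlab : l ∣ a - b := by
      rw [hc]
      exact Nat.Coprime.mul_dvd_of_dvd_of_dvd hcop hT2 h2ab'
    have htal : t ∣ a % l := (Nat.dvd_mod_iff hT3).mpr hta
    refine ⟨a % l / t, ?_, ?_, ?_⟩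
    · have hlt : a % l < l := Nat.mod_lt _ hl0
      have := Nat.div_lt_div_of_lt_of_dvd hT3 hlt
      have hlt2 : l / t = 2 := by rw [hc]; exact Nat.mul_div_cancel_left 2 ht0
      omega
    · have hdm : a % l / t * t = a % l := Nat.div_mul_cancel htal
      show a % l = (a % l / t * t) % l
      rw [hdm, Nat.mod_eq_of_lt (Nat.mod_lt _ hl0)]
    · have hdm : a % l / t * t = a % l := Nat.div_mul_cancel htal
      have hmod : b ≡ a [MOD l] := (Nat.modEq_iff_dvd' hba).mpr hlab
      calc b ≡ a [MOD l] := hmod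
        _ ≡ a % l / t * t [MOD l] := by
            show a % l = (a % l / t * t) % l
            rw [hdm, Nat.mod_eq_of_lt (Nat.mod_lt _ hl0)]

/-- Lemma 3.1 of the paper. Let `α, β` be roots of unity in a field `K`
with `αβ ≠ 1` and `αβ⁻¹ ≠ 1`, and assume `ord(αβ) = ord(αβ⁻¹) = t`. Set
`m = ord(α)`, `n = ord(β)`, `l = lcm(m,n)`. Then every pair of nonnegative integers
`(a,b)` satisfying `α^aβ^b = 1 = α^bβ^a` satisfies `a ≡ kt (mod l)` and
`b ≡ kt (mod l)` for some `0 ≤ k ≤ l/t − 1`. -/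
theorem stmt3 {K : Type*} [Field K] (α β : K) (hα : α ≠ 0) (hβ : β ≠ 0)
    (hoα : 0 < orderOf α) (hoβ : 0 < orderOf β)
    (hab : α * β ≠ 1) (hab' : α * β⁻¹ ≠ 1)
    (ht : orderOf (α * β) = orderOf (α * β⁻¹))
    (a b : ℕ) (h1 : α ^ a * β ^ b = 1) (h2 : α ^ b * β ^ a = 1) :
    ∃ k : ℕ,
      k ≤ Nat.lcm (orderOf α) (orderOf β) / orderOf (α * β) - 1 ∧
      a ≡ k * orderOf (α * β) [MOD Nat.lcm (orderOf α) (orderOf β)] ∧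
      b ≡ k * orderOf (α * β) [MOD Nat.lcm (orderOf α) (orderOf β)] := by
  rcases le_total b a with h | h
  · exact stmt3_aux α β hα hβ hoα hoβ ht a b h h1 h2
  · obtain ⟨k, hk, hkb, hka⟩ := stmt3_aux α β hα hβ hoα hoβ ht b a h h2 h1
    exact ⟨k, hk, hka, hkb⟩
end

section
/- Assume ord(αβ) = ord(αβ⁻¹) = t. Then in M₂(α,β) the quantum determinant satisfies the algebraic dependence relation D^t = X₁₁^tX₂₂^t + (−1)^t α^{−t(t+1)/2} β^{t(t−1)/2} X₁₂^tX₂₁^t. -/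
noncomputable section

open MulOpposite

variable {K : Type*} [Field K]

section Aux
open Polynomial Finset

lemma prodLemma {K : Type*} [Field K] {R : Type*} [CommRing R] [Algebra K R]
    (x y : R) (q c : K) (t : ℕ) (ht : 0 < t) (hq : IsPrimitiveRoot q t) :
    ∏ k ∈ range t, (x - (q ^ k * c) • y) = x ^ t - c ^ t • y ^ t := by
  have hB : IsPrimitiveRoot (Polynomial.C q : Polynomial K) t :=
    hq.map_of_injective Polynomial.C_injective
  have key := X_pow_sub_C_eq_prod hB ht (rfl : (Polynomial.C c * Polynomial.X) ^ t = _)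
  have h2 := congrArg (Polynomial.eval₂ ((Polynomial.aeval y).toRingHom :
      Polynomial K →+* R) x) key
  simp only [eval₂_sub, eval₂_X_pow, eval₂_C, eval₂_finset_prod, eval₂_X, eval₂_mul, eval₂_pow,
    map_pow, map_mul, AlgHom.toRingHom_eq_coe, AlgHom.coe_toRingHom, Polynomial.aeval_C,
    Polynomial.aeval_X, Polynomial.aeval_mul] at h2
  have e1 : ∀ k : ℕ, ((q ^ k * c) • y) = (algebraMap K R) q ^ k * ((algebraMap K R) c * y) := by
    intro k; rw [Algebra.smul_def, map_mul, map_pow, mul_assoc]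
  have e2 : (c ^ t • y ^ t) = ((algebraMap K R) c * y) ^ t := by
    rw [mul_pow, Algebra.smul_def, map_pow]
  simp only [e1, e2]
  exact h2.symm

lemma halfArith (n : ℕ) : (n + 1) * n / 2 = n * (n - 1) / 2 + n := by
  obtain ⟨k, hk⟩ : Even (n * (n - 1)) := by
    rcases n with _ | m
    · simp
    · simpa [Nat.add_sub_cancel, mul_comm] using Nat.even_mul_succ_self m
  have h2 : (n + 1) * n = n * (n - 1) + 2 * n := by
    rcases n with _ | m
    · rfl
    · simp only [Nat.add_sub_cancel]; ring
  omega

lemma keyLemma {A : Type*} [Ring A] [Algebra K A]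
    (α β : K) (hα : α ≠ 0) (hβ : β ≠ 0)
    (a b c d : A)
    (R1 : b * a = α • (a * b)) (R2 : c * a = β • (a * c))
    (R3 : d * c = α • (c * d)) (R4 : d * b = β • (b * d))
    (R5 : c * b = (β * α⁻¹) • (b * c))
    (R6 : d * a = a * d + (β - α⁻¹) • (b * c))
    (t : ℕ) (ht : 0 < t) (hq : IsPrimitiveRoot (α * β) t) :
    (a * d - α⁻¹ • (b * c)) ^ t
      = a ^ t * d ^ t
        + ((-α⁻¹) ^ t * (β * α⁻¹) ^ (t * (t - 1) / 2)) • (b ^ t * c ^ t) := by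
  have hq0 : (α * β) ≠ 0 := mul_ne_zero hα hβ
  set v : A := b * c with hvdef
  set D : A := a * d - α⁻¹ • v with hDdef
  -- extended (right-assoc) forms of the relations
  have R1' : ∀ x : A, b * (a * x) = α • (a * (b * x)) := fun x => by
    rw [← mul_assoc, R1, smul_mul_assoc, mul_assoc]
  have R2' : ∀ x : A, c * (a * x) = β • (a * (c * x)) := fun x => by
    rw [← mul_assoc, R2, smul_mul_assoc, mul_assoc]
  have R3' : ∀ x : A, d * (c * x) = α • (c * (d * x)) := fun x => by
    rw [← mul_assoc, R3, smul_mul_assoc, mul_assoc]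
  have R4' : ∀ x : A, d * (b * x) = β • (b * (d * x)) := fun x => by
    rw [← mul_assoc, R4, smul_mul_assoc, mul_assoc]
  have R5' : ∀ x : A, c * (b * x) = (β * α⁻¹) • (b * (c * x)) := fun x => by
    rw [← mul_assoc, R5, smul_mul_assoc, mul_assoc]
  have R6' : ∀ x : A, d * (a * x) = a * (d * x) + (β - α⁻¹) • (b * (c * x)) := fun x => by
    rw [← mul_assoc, R6, add_mul, smul_mul_assoc, mul_assoc, mul_assoc]
  have hvd : v * d = (α * β)⁻¹ • (d * v) := by
    rw [hvdef]
    simp only [mul_add, add_mul, mul_sub, sub_mul, smul_add, smul_sub, mul_smul_comm,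
      smul_mul_assoc, smul_smul, mul_assoc, R1, R2, R3, R4, R5, R6, R1', R2', R3', R4', R5', R6']
    try match_scalars <;> (try field_simp) <;> (try ring)
  have hva : v * a = (α * β) • (a * v) := by
    rw [hvdef]
    simp only [mul_add, add_mul, mul_sub, sub_mul, smul_add, smul_sub, mul_smul_comm,
      smul_mul_assoc, smul_smul, mul_assoc, R1, R2, R3, R4, R5, R6, R1', R2', R3', R4', R5', R6']
    try match_scalars <;> (try field_simp) <;> (try ring)
  have hDd : d * D = D * d := by
    rw [hDdef, hvdef]
    simp only [mul_add, add_mul, mul_sub, sub_mul, smul_add, smul_sub, mul_smul_comm,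
      smul_mul_assoc, smul_smul, mul_assoc, R1, R2, R3, R4, R5, R6, R1', R2', R3', R4', R5', R6']
    try match_scalars <;> (try field_simp) <;> (try ring)
  have hDv : D * v = v * D := by
    rw [hDdef, hvdef]
    simp only [mul_add, add_mul, mul_sub, sub_mul, smul_add, smul_sub, mul_smul_comm,
      smul_mul_assoc, smul_smul, mul_assoc, R1, R2, R3, R4, R5, R6, R1', R2', R3', R4', R5', R6']
    try match_scalars <;> (try field_simp) <;> (try ring)
  -- powers
  have hvdn : ∀ n : ℕ, v * d ^ n = ((α * β)⁻¹) ^ n • (d ^ n * v) := by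
    intro n
    induction n with
    | zero => simp
    | succ n ih =>
      rw [pow_succ, ← mul_assoc, ih, smul_mul_assoc, mul_assoc, hvd, mul_smul_comm, smul_smul,
        ← pow_succ, ← mul_assoc]
  have hDdn : ∀ n : ℕ, D * d ^ n = d ^ n * D := fun n =>
    (Commute.pow_right (hDd.symm : Commute D d) n).eq
  have had : a * d = D + α⁻¹ • v := by rw [hDdef]; abel
  have hrec : ∀ n : ℕ, a ^ (n + 1) * d ^ (n + 1)
      = (a ^ n * d ^ n) * (D + (α⁻¹ * ((α * β)⁻¹) ^ n) • v) := by
    intro n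
    calc a ^ (n + 1) * d ^ (n + 1) = (a ^ n * a) * (d * d ^ n) := by rw [pow_succ, pow_succ']
    _ = a ^ n * ((a * d) * d ^ n) := by rw [mul_assoc, mul_assoc]
    _ = a ^ n * ((D + α⁻¹ • v) * d ^ n) := by rw [had]
    _ = a ^ n * (D * d ^ n) + α⁻¹ • (a ^ n * (v * d ^ n)) := by
        rw [add_mul, smul_mul_assoc, mul_add, mul_smul_comm]
    _ = a ^ n * (d ^ n * D) + (α⁻¹ * ((α * β)⁻¹) ^ n) • (a ^ n * (d ^ n * v)) := by
        rw [hDdn, hvdn, mul_smul_comm, smul_smul]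
    _ = (a ^ n * d ^ n) * (D + (α⁻¹ * ((α * β)⁻¹) ^ n) • v) := by
        rw [mul_add, mul_smul_comm, ← mul_assoc, ← mul_assoc]
  -- commutative subalgebra generated by D and v
  have hcomm : ∀ x ∈ ({D, v} : Set A), ∀ y ∈ ({D, v} : Set A), x * y = y * x := by
    intro x hx y hy
    rcases hx with rfl | hx
    · rcases hy with rfl | hy
      · rfl
      · rw [Set.mem_singleton_iff] at hy; subst hy; exact hDv
    · rw [Set.mem_singleton_iff] at hx; subst hx
      rcases hy with rfl | hy
      · exact hDv.symm
      · rw [Set.mem_singleton_iff] at hy; subst hy; rfl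
  letI : CommRing (Algebra.adjoin K ({D, v} : Set A)) := Algebra.adjoinCommRingOfComm K hcomm
  have hDS : D ∈ Algebra.adjoin K ({D, v} : Set A) := Algebra.subset_adjoin (by simp)
  have hvS : v ∈ Algebra.adjoin K ({D, v} : Set A) := Algebra.subset_adjoin (by simp)
  have hcoe_mul : ∀ p r : Algebra.adjoin K ({D, v} : Set A),
      ((p * r : _) : A) = (p : A) * (r : A) := by intro p r; rfl
  have hcoe_pow : ∀ (p : Algebra.adjoin K ({D, v} : Set A)) (n : ℕ),
      ((p ^ n : _) : A) = (p : A) ^ n := by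
    intro p n
    induction n with
    | zero => rw [pow_zero, pow_zero]; rfl
    | succ n ih => rw [pow_succ, pow_succ, hcoe_mul, ih]
  have hfac : ∀ n : ℕ,
      (((⟨D, hDS⟩ : Algebra.adjoin K ({D, v} : Set A))
        - (((α * β)⁻¹) ^ n * (-α⁻¹)) • (⟨v, hvS⟩ : Algebra.adjoin K ({D, v} : Set A)) : _) : A)
      = D + (α⁻¹ * ((α * β)⁻¹) ^ n) • v := by
    intro n
    have h1 : (((⟨D, hDS⟩ : Algebra.adjoin K ({D, v} : Set A))
        - (((α * β)⁻¹) ^ n * (-α⁻¹)) • (⟨v, hvS⟩ : Algebra.adjoin K ({D, v} : Set A)) : _) : A)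
        = D - (((α * β)⁻¹) ^ n * (-α⁻¹)) • v := by rfl
    rw [h1, mul_neg, neg_smul, sub_neg_eq_add, mul_comm]
  have hmain : ∀ n : ℕ, a ^ n * d ^ n
      = ((∏ k ∈ Finset.range n, ((⟨D, hDS⟩ : Algebra.adjoin K ({D, v} : Set A))
          - (((α * β)⁻¹) ^ k * (-α⁻¹)) • (⟨v, hvS⟩ : Algebra.adjoin K ({D, v} : Set A))) : _) : A) := by
    intro n
    induction n with
    | zero => rw [pow_zero, pow_zero, one_mul, Finset.range_zero, Finset.prod_empty]; rfl
    | succ n ih =>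
      rw [Finset.prod_range_succ, hcoe_mul, ← ih, hfac, hrec]
  have hIP : IsPrimitiveRoot ((α * β)⁻¹) t := hq.inv
  have hprod := prodLemma (K := K) (R := Algebra.adjoin K ({D, v} : Set A))
    (⟨D, hDS⟩ : Algebra.adjoin K ({D, v} : Set A))
    (⟨v, hvS⟩ : Algebra.adjoin K ({D, v} : Set A)) ((α * β)⁻¹) (-α⁻¹) t ht hIP
  have hfinal : a ^ t * d ^ t = D ^ t - ((-α⁻¹) ^ t) • v ^ t := by
    rw [hmain t, hprod]
    have h1 : ((((⟨D, hDS⟩ : Algebra.adjoin K ({D, v} : Set A)) ^ t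
        - (-α⁻¹) ^ t • (⟨v, hvS⟩ : Algebra.adjoin K ({D, v} : Set A)) ^ t : _) : A))
        = (((⟨D, hDS⟩ : Algebra.adjoin K ({D, v} : Set A)) ^ t : _) : A)
          - ((-α⁻¹) ^ t) • (((⟨v, hvS⟩ : Algebra.adjoin K ({D, v} : Set A)) ^ t : _) : A) := by rfl
    rw [h1, hcoe_pow, hcoe_pow]
  have hDt : D ^ t = a ^ t * d ^ t + ((-α⁻¹) ^ t) • v ^ t := by
    rw [hfinal]; abel
  -- reorder v ^ t
  have hcbn : ∀ n : ℕ, c ^ n * b = ((β * α⁻¹) ^ n) • (b * c ^ n) := by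
    intro n
    induction n with
    | zero => simp
    | succ n ih =>
      calc c ^ (n + 1) * b = c ^ n * (c * b) := by rw [pow_succ, mul_assoc]
      _ = (β * α⁻¹) • (c ^ n * (b * c)) := by rw [R5, mul_smul_comm]
      _ = (β * α⁻¹) • ((c ^ n * b) * c) := by rw [mul_assoc]
      _ = (β * α⁻¹) • (((β * α⁻¹) ^ n • (b * c ^ n)) * c) := by rw [ih]
      _ = ((β * α⁻¹) ^ (n + 1)) • (b * c ^ (n + 1)) := by
          rw [smul_mul_assoc, smul_smul, ← pow_succ', mul_assoc, ← pow_succ]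
  have hvn : ∀ n : ℕ, v ^ n = ((β * α⁻¹) ^ (n * (n - 1) / 2)) • (b ^ n * c ^ n) := by
    intro n
    induction n with
    | zero => simp
    | succ n ih =>
      have harr : v ^ (n + 1)
          = ((β * α⁻¹) ^ (n * (n - 1) / 2 + n)) • (b ^ (n + 1) * c ^ (n + 1)) := by
        calc v ^ (n + 1) = v ^ n * v := by rw [pow_succ]
        _ = ((β * α⁻¹) ^ (n * (n - 1) / 2)) • ((b ^ n * c ^ n) * (b * c)) := by
            rw [ih, smul_mul_assoc, hvdef]
        _ = ((β * α⁻¹) ^ (n * (n - 1) / 2)) • (b ^ n * ((c ^ n * b) * c)) := by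
            rw [mul_assoc, ← mul_assoc (c ^ n)]
        _ = ((β * α⁻¹) ^ (n * (n - 1) / 2)) • (b ^ n * (((β * α⁻¹) ^ n • (b * c ^ n)) * c)) := by
            rw [hcbn]
        _ = ((β * α⁻¹) ^ (n * (n - 1) / 2) * (β * α⁻¹) ^ n)
              • (b ^ n * (b * (c ^ n * c))) := by
            rw [smul_mul_assoc, mul_smul_comm, smul_smul, mul_assoc]
        _ = ((β * α⁻¹) ^ (n * (n - 1) / 2 + n)) • ((b ^ n * b) * (c ^ n * c)) := by
            rw [pow_add, ← mul_assoc (b ^ n)]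
        _ = ((β * α⁻¹) ^ (n * (n - 1) / 2 + n)) • (b ^ (n + 1) * c ^ (n + 1)) := by
            rw [← pow_succ, ← pow_succ]
      rw [harr]
      have : (n + 1) * (n + 1 - 1) / 2 = n * (n - 1) / 2 + n := by
        simpa [Nat.add_sub_cancel] using halfArith n
      rw [this]
  rw [hDt, hvn t, smul_smul]

end Aux

/-- Let `α, β` be roots of unity with `αβ ≠ 1`, `αβ⁻¹ ≠ 1` and
`ord(αβ) = ord(αβ⁻¹) = t`. Then in `M₂(α,β)`:
`D^t = X₁₁^tX₂₂^t + (−1)^t α^{−t(t+1)/2} β^{t(t−1)/2} X₁₂^tX₂₁^t`. -/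
theorem stmt5 (α β : K) (hα : α ≠ 0) (hβ : β ≠ 0)
    (hoα : 0 < orderOf α) (hoβ : 0 < orderOf β)
    (hab : α * β ≠ 1) (hab' : α * β⁻¹ ≠ 1)
    (ht : orderOf (α * β) = orderOf (α * β⁻¹)) :
    Dq α β ^ orderOf (α * β) =
      X11 α β ^ orderOf (α * β) * X22 α β ^ orderOf (α * β) +
        ((-1 : K) ^ orderOf (α * β) *
            (α ^ (orderOf (α * β) * (orderOf (α * β) + 1) / 2))⁻¹ *
            β ^ (orderOf (α * β) * (orderOf (α * β) - 1) / 2)) •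
          (X12 α β ^ orderOf (α * β) * X21 α β ^ orderOf (α * β)) := by
  have ht0 : 0 < orderOf (α * β) := by
    have hd : orderOf (α * β) ∣ Nat.lcm (orderOf α) (orderOf β) :=
      (Commute.all α β).orderOf_mul_dvd_lcm
    exact Nat.pos_of_dvd_of_pos hd (Nat.lcm_pos hoα hoβ)
  have hq : IsPrimitiveRoot (α * β) (orderOf (α * β)) := IsPrimitiveRoot.orderOf _
  have R1 : X12 α β * X11 α β = α • (X11 α β * X12 α β) := by
    have h := RingQuot.mkAlgHom_rel K (QMRel.r12_11 (α := α) (β := β))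
    simpa only [map_mul, map_smul, X11, X12] using h
  have R2 : X21 α β * X11 α β = β • (X11 α β * X21 α β) := by
    have h := RingQuot.mkAlgHom_rel K (QMRel.r21_11 (α := α) (β := β))
    simpa only [map_mul, map_smul, X11, X21] using h
  have R3 : X22 α β * X21 α β = α • (X21 α β * X22 α β) := by
    have h := RingQuot.mkAlgHom_rel K (QMRel.r22_21 (α := α) (β := β))
    simpa only [map_mul, map_smul, X21, X22] using h
  have R4 : X22 α β * X12 α β = β • (X12 α β * X22 α β) := by
    have h := RingQuot.mkAlgHom_rel K (QMRel.r22_12 (α := α) (β := β))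
    simpa only [map_mul, map_smul, X12, X22] using h
  have R5 : X21 α β * X12 α β = (β * α⁻¹) • (X12 α β * X21 α β) := by
    have h := RingQuot.mkAlgHom_rel K (QMRel.r21_12 (α := α) (β := β))
    simpa only [map_mul, map_smul, X12, X21] using h
  have R6 : X22 α β * X11 α β
      = X11 α β * X22 α β + (β - α⁻¹) • (X12 α β * X21 α β) := by
    have h := RingQuot.mkAlgHom_rel K (QMRel.r22_11 (α := α) (β := β))
    simpa only [map_mul, map_smul, map_add, X11, X12, X21, X22] using h
  have hkey := keyLemma α β hα hβ (X11 α β) (X12 α β) (X21 α β) (X22 α β)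
    R1 R2 R3 R4 R5 R6 (orderOf (α * β)) ht0 hq
  have hDq : Dq α β = X11 α β * X22 α β - α⁻¹ • (X12 α β * X21 α β) := rfl
  rw [hDq, hkey]
  congr 1
  congr 1
  rw [neg_pow, mul_pow, inv_pow, inv_pow,
    mul_comm (orderOf (α * β)) (orderOf (α * β) + 1), halfArith, pow_add, mul_inv]
  ring
end
end

section
/- Let α, β ∈ K* be roots of unity with α ≠ β and α ≠ β⁻¹. Set m := ord(α), n := ord(β), l := lcm(m,n), and let g ∈ K* with ord(g) = l and integers A, B with α = g^A and β = g^B. Then l²/gcd(A² − B², l) = ord(αβ)·ord(αβ⁻¹) if n divides ord(αβ)·ord(αβ⁻¹), and l²/gcd(A² − B², l) = 2·ord(αβ)·ord(αβ⁻¹) otherwise. (This quantity is the PI degree of the two-parameter quantum matrix algebra M₂(α,β).) -/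
private lemma gcdMulDvd (m n k : ℕ) : Nat.gcd (m * n) k ∣ Nat.gcd m k * Nat.gcd n k := by
  rw [Nat.gcd_comm (m*n) k, Nat.gcd_comm m k, Nat.gcd_comm n k]
  exact Nat.gcd_mul_right_dvd_mul_gcd k m n

private lemma intGcdNat (X : ℤ) (l : ℕ) : Int.gcd X (l:ℤ) = Nat.gcd X.natAbs l := by
  simp [Int.gcd]

private lemma coreAux (l : ℕ) (hl : 0 < l) (A B : ℤ)
    (hcop : Nat.Coprime (Int.gcd A l) (Int.gcd B l))
    (hx : ¬ ((l:ℤ) ∣ (A+B))) (hy : ¬ ((l:ℤ) ∣ (A-B))) :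
    (l / Int.gcd B l ∣ l / Int.gcd (A+B) l * (l / Int.gcd (A-B) l) →
       Int.gcd (A+B) l * Int.gcd (A-B) l = Int.gcd ((A+B)*(A-B)) l) ∧
    (¬ (l / Int.gcd B l ∣ l / Int.gcd (A+B) l * (l / Int.gcd (A-B) l)) →
       Int.gcd (A+B) l * Int.gcd (A-B) l = 2 * Int.gcd ((A+B)*(A-B)) l) := by
  have hl' : l ≠ 0 := hl.ne'
  have hU : (A+B).natAbs ≠ 0 := by
    intro h
    exact hx (by rw [Int.natAbs_eq_zero.mp h]; exact dvd_zero _)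
  have hV : (A-B).natAbs ≠ 0 := by
    intro h
    exact hy (by rw [Int.natAbs_eq_zero.mp h]; exact dvd_zero _)
  simp only [intGcdNat, Int.natAbs_mul]
  set U := (A+B).natAbs with hUdef
  set V := (A-B).natAbs with hVdef
  set du := Nat.gcd U l with hdudef
  set dv := Nat.gcd V l with hdvdef
  set D := Nat.gcd (U*V) l with hDdef
  set e := Nat.gcd B.natAbs l with hedef
  have hdul : du ∣ l := Nat.gcd_dvd_right _ _
  have hdvl : dv ∣ l := Nat.gcd_dvd_right _ _
  have hel : e ∣ l := Nat.gcd_dvd_right _ _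
  have hdu0 : du ≠ 0 := Nat.ne_of_gt (Nat.gcd_pos_of_pos_right _ hl)
  have hdv0 : dv ≠ 0 := Nat.ne_of_gt (Nat.gcd_pos_of_pos_right _ hl)
  have hD0 : D ≠ 0 := Nat.ne_of_gt (Nat.gcd_pos_of_pos_right _ hl)
  have he0 : e ≠ 0 := Nat.ne_of_gt (Nat.gcd_pos_of_pos_right _ hl)
  have hldu0 : l / du ≠ 0 := Nat.ne_of_gt (Nat.div_pos (Nat.le_of_dvd hl hdul) (Nat.pos_of_ne_zero hdu0))
  have hldv0 : l / dv ≠ 0 := Nat.ne_of_gt (Nat.div_pos (Nat.le_of_dvd hl hdvl) (Nat.pos_of_ne_zero hdv0))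
  have hn0 : l / e ≠ 0 := Nat.ne_of_gt (Nat.div_pos (Nat.le_of_dvd hl hel) (Nat.pos_of_ne_zero he0))
  have hP0 : l / du * (l / dv) ≠ 0 := Nat.mul_ne_zero hldu0 hldv0
  have hDdvd : D ∣ du * dv := gcdMulDvd U V l
  set Q := du * dv / D with hQdef
  have hQmul : D * Q = du * dv := Nat.mul_div_cancel' hDdvd
  have hQ0 : Q ≠ 0 := by
    intro h
    rw [h, mul_zero] at hQmul
    exact Nat.mul_ne_zero hdu0 hdv0 hQmul.symm
  -- factorization computations
  have fdu : ∀ p, du.factorization p = min (U.factorization p) (l.factorization p) := by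
    intro p; rw [hdudef, Nat.factorization_gcd hU hl', Finsupp.inf_apply]
  have fdv : ∀ p, dv.factorization p = min (V.factorization p) (l.factorization p) := by
    intro p; rw [hdvdef, Nat.factorization_gcd hV hl', Finsupp.inf_apply]
  have fD : ∀ p, D.factorization p
      = min (U.factorization p + V.factorization p) (l.factorization p) := by
    intro p
    rw [hDdef, Nat.factorization_gcd (Nat.mul_ne_zero hU hV) hl', Finsupp.inf_apply,
      Nat.factorization_mul hU hV, Finsupp.add_apply]
  have fn : ∀ p, (l / e).factorization p = l.factorization p - e.factorization p := by
    intro p; rw [Nat.factorization_div hel, Finsupp.tsub_apply]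
  have fP : ∀ p, (l / du * (l / dv)).factorization p
      = (l.factorization p - du.factorization p) + (l.factorization p - dv.factorization p) := by
    intro p
    rw [Nat.factorization_mul hldu0 hldv0, Finsupp.add_apply,
      Nat.factorization_div hdul, Nat.factorization_div hdvl,
      Finsupp.tsub_apply, Finsupp.tsub_apply]
  have fQ : ∀ p, D.factorization p + Q.factorization p = du.factorization p + dv.factorization p := by
    intro p
    have h := congrArg (fun x => Nat.factorization x p) hQmul
    simpa [Nat.factorization_mul hD0 hQ0, Nat.factorization_mul hdu0 hdv0,
      Finsupp.add_apply] using h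
  -- number-theoretic facts
  have hAB : ∀ p : ℕ, p.Prime → p ∣ l → (p:ℤ) ∣ A → (p:ℤ) ∣ B → False := by
    intro p pp pl pa pb
    have h1 : p ∣ Int.gcd A l := by
      rw [intGcdNat]
      exact Nat.dvd_gcd (by simpa using Int.natAbs_dvd_natAbs.mpr pa) pl
    have h2 : p ∣ Int.gcd B l := by
      rw [intGcdNat]
      exact Nat.dvd_gcd (by simpa using Int.natAbs_dvd_natAbs.mpr pb) pl
    have : p ∣ 1 := hcop ▸ Nat.dvd_gcd h1 h2
    exact pp.one_lt.ne' (Nat.dvd_one.mp this)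
  have F1 : ∀ p : ℕ, p.Prime → p ≠ 2 →
      min (U.factorization p) (min (V.factorization p) (l.factorization p)) = 0 := by
    intro p pp p2
    by_contra h
    have pU : p ∣ U := Nat.dvd_of_factorization_pos (by omega)
    have pV : p ∣ V := Nat.dvd_of_factorization_pos (by omega)
    have pl : p ∣ l := Nat.dvd_of_factorization_pos (by omega)
    have pUZ : (p:ℤ) ∣ (A+B) := Int.natAbs_dvd_natAbs.mp (by simpa [← hUdef] using pU)
    have pVZ : (p:ℤ) ∣ (A-B) := Int.natAbs_dvd_natAbs.mp (by simpa [← hVdef] using pV)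
    have pInt : Prime (p:ℤ) := Int.prime_iff_natAbs_prime.mpr (by simpa using pp)
    have p2A : (p:ℤ) ∣ 2*A := by
      have h2 : (2*A : ℤ) = (A+B) + (A-B) := by ring
      rw [h2]; exact dvd_add pUZ pVZ
    have p2B : (p:ℤ) ∣ 2*B := by
      have h2 : (2*B : ℤ) = (A+B) - (A-B) := by ring
      rw [h2]; exact dvd_sub pUZ pVZ
    have hp2 : ¬ ((p:ℤ) ∣ 2) := by
      intro h2
      have : p ∣ 2 := by exact_mod_cast Int.natCast_dvd_natCast.mp (by exact_mod_cast h2)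
      exact p2 ((Nat.prime_dvd_prime_iff_eq pp Nat.prime_two).mp this)
    have pA : (p:ℤ) ∣ A := (pInt.dvd_mul.mp p2A).resolve_left hp2
    have pB : (p:ℤ) ∣ B := (pInt.dvd_mul.mp p2B).resolve_left hp2
    exact hAB p pp pl pA pB
  have F2 : min (U.factorization 2) (min (V.factorization 2) (l.factorization 2)) ≤ 1 := by
    by_contra h
    push_neg at h
    have hU4 : (2:ℕ)^2 ∣ U := (Nat.Prime.pow_dvd_iff_le_factorization Nat.prime_two hU).mpr (by omega)
    have hV4 : (2:ℕ)^2 ∣ V := (Nat.Prime.pow_dvd_iff_le_factorization Nat.prime_two hV).mpr (by omega)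
    have hl2 : (2:ℕ) ∣ l := Nat.dvd_of_factorization_pos (by omega)
    have hU4Z : ((2:ℤ))^2 ∣ (A+B) := by
      have := (Int.natAbs_dvd_natAbs (a := ((2^2 : ℕ) : ℤ)) (b := A+B)).mp (by simpa [← hUdef] using hU4)
      exact_mod_cast this
    have hV4Z : ((2:ℤ))^2 ∣ (A-B) := by
      have := (Int.natAbs_dvd_natAbs (a := ((2^2 : ℕ) : ℤ)) (b := A-B)).mp (by simpa [← hVdef] using hV4)
      exact_mod_cast this
    have h2A : (2:ℤ)*2 ∣ 2*A := by
      have h2 : (2*A : ℤ) = (A+B) + (A-B) := by ring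
      rw [h2, show ((2:ℤ)*2) = 2^2 by ring]
      exact dvd_add hU4Z hV4Z
    have hA2 : (2:ℤ) ∣ A := (mul_dvd_mul_iff_left (two_ne_zero (α := ℤ))).mp h2A
    have hB2 : (2:ℤ) ∣ B := by
      have : (B:ℤ) = (A+B) - A := by ring
      rw [this]
      exact dvd_sub (dvd_trans (dvd_pow_self 2 two_ne_zero) hU4Z) hA2
    exact hAB 2 Nat.prime_two hl2 hA2 hB2
  have F3 : 1 ≤ U.factorization 2 → 1 ≤ l.factorization 2 → e.factorization 2 = 0 := by
    intro h1 h2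
    apply Nat.factorization_eq_zero_of_not_dvd
    intro h2e
    have hB2 : (2:ℤ) ∣ B :=
      Int.natAbs_dvd_natAbs.mp (by simpa using dvd_trans h2e (Nat.gcd_dvd_left _ _))
    have hU2 : (2:ℤ) ∣ (A+B) :=
      Int.natAbs_dvd_natAbs.mp (by simpa [← hUdef] using Nat.dvd_of_factorization_pos (p := 2) (n := U) (by omega))
    have hA2 : (2:ℤ) ∣ A := by
      have : (A:ℤ) = (A+B) - B := by ring
      rw [this]; exact dvd_sub hU2 hB2
    exact hAB 2 Nat.prime_two (Nat.dvd_of_factorization_pos (by omega)) hA2 hB2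
  -- Q divides 2
  have hQdvd2 : Q ∣ 2 := by
    apply (Nat.factorization_le_iff_dvd hQ0 two_ne_zero).mp
    rw [Finsupp.le_def]
    intro p
    by_cases pp : p.Prime
    · have hq := fQ p
      rw [fD p, fdu p, fdv p] at hq
      by_cases p2 : p = 2
      · subst p2
        have hf2 : (2:ℕ).factorization 2 = 1 := by
          simp [Nat.Prime.factorization Nat.prime_two]
        rw [hf2]
        omega
      · have hf2 : (2:ℕ).factorization p = 0 := by
          simp [Nat.Prime.factorization Nat.prime_two, Finsupp.single_apply, Ne.symm p2]
        rw [hf2]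
        have := F1 p pp p2
        omega
    · rw [Nat.factorization_eq_zero_of_not_prime _ pp]
      exact Nat.zero_le _
  -- Q = 1 implies divisibility
  have key1 : Q = 1 → l / e ∣ l / du * (l / dv) := by
    intro hq
    apply (Nat.factorization_le_iff_dvd hn0 hP0).mp
    rw [Finsupp.le_def]
    intro p
    rw [fn p, fP p, fdu p, fdv p]
    have hqp := fQ p
    rw [hq, fD p, fdu p, fdv p] at hqp
    simp only [Nat.factorization_one, Finsupp.coe_zero, Pi.zero_apply, add_zero] at hqp
    omega
  -- Q = 2 implies non-divisibility
  have key2 : Q = 2 → ¬ (l / e ∣ l / du * (l / dv)) := by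
    intro hq hnp
    have hq2 : Q.factorization 2 = 1 := by
      rw [hq]; simp [Nat.Prime.factorization Nat.prime_two]
    have h2 := fQ 2
    rw [hq2, fD 2, fdu 2, fdv 2] at h2
    have he2 : e.factorization 2 = 0 := F3 (by omega) (by omega)
    have hle := Finsupp.le_def.mp ((Nat.factorization_le_iff_dvd hn0 hP0).mpr hnp) 2
    rw [fn 2, fP 2, fdu 2, fdv 2, he2] at hle
    omega
  constructor
  · intro h
    rcases (Nat.dvd_prime Nat.prime_two).mp hQdvd2 with h1 | h2
    · rw [← hQmul, h1, mul_one]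
    · exact absurd h (key2 h2)
  · intro h
    rcases (Nat.dvd_prime Nat.prime_two).mp hQdvd2 with h1 | h2
    · exact absurd (key1 h1) h
    · rw [← hQmul, h2, mul_comm]


private lemma gcdEmod (a b : ℤ) : Int.gcd (a % b) b = Int.gcd a b := by
  apply Nat.dvd_antisymm
  · rw [← Int.natCast_dvd_natCast]
    push_cast
    apply Int.dvd_coe_gcd
    · have h1 : (Int.gcd (a % b) b : ℤ) ∣ a % b := Int.gcd_dvd_left ..
      have h2 : (Int.gcd (a % b) b : ℤ) ∣ b := Int.gcd_dvd_right ..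
      have h3 := dvd_add h1 (Dvd.dvd.mul_right h2 (a / b))
      rwa [Int.emod_add_mul_ediv] at h3
    · exact Int.gcd_dvd_right ..
  · rw [← Int.natCast_dvd_natCast]
    push_cast
    apply Int.dvd_coe_gcd
    · have h1 : (Int.gcd a b : ℤ) ∣ a := Int.gcd_dvd_left ..
      have h2 : (Int.gcd a b : ℤ) ∣ b := Int.gcd_dvd_right ..
      rw [Int.emod_def]
      exact dvd_sub h1 (Dvd.dvd.mul_right h2 _)
    · exact Int.gcd_dvd_right ..

private lemma ordZpow {G : Type*} [Group G] (g : G) (l : ℕ) (hl : 0 < l)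
    (hgl : orderOf g = l) (X : ℤ) : orderOf (g ^ X) = l / Int.gcd X l := by
  have hl' : (l:ℤ) ≠ 0 := by exact_mod_cast hl.ne'
  have h0 : (0:ℤ) ≤ X % l := Int.emod_nonneg X hl'
  set k := (X % (l:ℤ)).toNat with hk
  have hkX : ((k:ℤ)) = X % l := Int.toNat_of_nonneg h0
  have hgk : Int.gcd X l = Nat.gcd l k := by
    rw [← gcdEmod X l, ← hkX, Int.gcd_natCast_natCast, Nat.gcd_comm]
  have hpow : g ^ X = g ^ k := by
    have hone : g ^ (l:ℤ) = 1 := by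
      rw [zpow_natCast, ← hgl, pow_orderOf_eq_one]
    calc g ^ X = g ^ (X % l + l * (X / l)) := by rw [Int.emod_add_mul_ediv]
      _ = g ^ (X % (l:ℤ)) * (g ^ (l:ℤ)) ^ (X / l) := by rw [zpow_add, zpow_mul]
      _ = g ^ (X % (l:ℤ)) := by rw [hone, one_zpow, mul_one]
      _ = g ^ k := by rw [← hkX, zpow_natCast]
  rw [hpow, hgk]
  rcases Nat.eq_zero_or_pos k with hk0 | hkpos
  · rw [hk0]
    simp [Nat.div_self hl]
  · rw [orderOf_pow' g (Nat.pos_iff_ne_zero.mp hkpos), hgl]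

private lemma coprimeDiv (m n : ℕ) (hm : 0 < m) (hn : 0 < n) :
    Nat.Coprime (Nat.lcm m n / m) (Nat.lcm m n / n) := by
  set l := Nat.lcm m n with hldef
  have hl : 0 < l := Nat.pos_of_ne_zero (Nat.lcm_ne_zero hm.ne' hn.ne')
  set d := Nat.gcd (l / m) (l / n) with hd
  have hml : m ∣ l := Nat.dvd_lcm_left m n
  have hnl : n ∣ l := Nat.dvd_lcm_right m n
  have h1 : d * m ∣ l := by
    have := mul_dvd_mul_right (Nat.gcd_dvd_left (l / m) (l / n)) m
    rwa [Nat.div_mul_cancel hml] at this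
  have h2 : d * n ∣ l := by
    have := mul_dvd_mul_right (Nat.gcd_dvd_right (l / m) (l / n)) n
    rwa [Nat.div_mul_cancel hnl] at this
  have h3 : Nat.lcm (d * m) (d * n) ∣ l := Nat.lcm_dvd h1 h2
  rw [Nat.lcm_mul_left, ← hldef] at h3
  have h4 : d * l ∣ 1 * l := by rwa [one_mul]
  exact Nat.dvd_one.mp ((Nat.mul_dvd_mul_iff_right hl).mp h4)

/-- Theorem 4.2 of the paper, via [Case analysis in §4.2]. Let
`α, β ∈ K*` be roots of unity with `α ≠ β` and `α ≠ β⁻¹`; set `m = ord(α)`,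
`n = ord(β)`, `l = lcm(m,n)`, let `g ∈ K*` with `ord(g) = l` and `α = g^A`,
`β = g^B`. Then `l²/gcd(A² − B², l)` equals `ord(αβ)·ord(αβ⁻¹)` if
`n ∣ ord(αβ)·ord(αβ⁻¹)`, and equals `2·ord(αβ)·ord(αβ⁻¹)` otherwise. (This
quantity is the PI degree of `M₂(α,β)`.) -/
theorem stmt10 {K : Type*} [Field K] (α β : Kˣ)
    (hoα : 0 < orderOf α) (hoβ : 0 < orderOf β)
    (hne : α ≠ β) (hne' : α ≠ β⁻¹)
    (g : Kˣ) (hg : orderOf g = Nat.lcm (orderOf α) (orderOf β))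
    (A B : ℤ) (hA : α = g ^ A) (hB : β = g ^ B) :
    (orderOf β ∣ orderOf (α * β) * orderOf (α * β⁻¹) →
      Nat.lcm (orderOf α) (orderOf β) ^ 2 /
          Int.gcd (A ^ 2 - B ^ 2) (Nat.lcm (orderOf α) (orderOf β)) =
        orderOf (α * β) * orderOf (α * β⁻¹)) ∧
    (¬ orderOf β ∣ orderOf (α * β) * orderOf (α * β⁻¹) →
      Nat.lcm (orderOf α) (orderOf β) ^ 2 /
          Int.gcd (A ^ 2 - B ^ 2) (Nat.lcm (orderOf α) (orderOf β)) =
        2 * (orderOf (α * β) * orderOf (α * β⁻¹))) := by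
  set l := Nat.lcm (orderOf α) (orderOf β) with hldef
  have hl : 0 < l := Nat.pos_of_ne_zero (Nat.lcm_ne_zero hoα.ne' hoβ.ne')
  have hdl : ∀ X : ℤ, Int.gcd X l ∣ l := by
    intro X
    simpa [Int.gcd] using Nat.gcd_dvd_right X.natAbs l
  have ordz : ∀ X : ℤ, orderOf (g ^ X) = l / Int.gcd X l := fun X => ordZpow g l hl hg X
  have hm : orderOf α = l / Int.gcd A l := by rw [hA, ordz]
  have hn : orderOf β = l / Int.gcd B l := by rw [hB, ordz]
  have hgA : Int.gcd A l = l / orderOf α := by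
    rw [hm, Nat.div_div_self (hdl A) hl.ne']
  have hgB : Int.gcd B l = l / orderOf β := by
    rw [hn, Nat.div_div_self (hdl B) hl.ne']
  have hcop : Nat.Coprime (Int.gcd A l) (Int.gcd B l) := by
    rw [hgA, hgB, hldef]
    exact coprimeDiv _ _ hoα hoβ
  have hx : ¬ ((l:ℤ) ∣ (A+B)) := by
    intro h
    have h1 : g ^ (A+B) = 1 := orderOf_dvd_iff_zpow_eq_one.mp (by rw [hg]; exact h)
    rw [zpow_add, ← hA, ← hB] at h1
    exact hne' (eq_inv_of_mul_eq_one_left h1)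
  have hy : ¬ ((l:ℤ) ∣ (A-B)) := by
    intro h
    have h1 : g ^ (A-B) = 1 := orderOf_dvd_iff_zpow_eq_one.mp (by rw [hg]; exact h)
    rw [zpow_sub, ← hA, ← hB] at h1
    exact hne (mul_inv_eq_one.mp h1)
  have hoab : orderOf (α * β) = l / Int.gcd (A+B) l := by
    rw [hA, hB, ← zpow_add, ordz]
  have hoab' : orderOf (α * β⁻¹) = l / Int.gcd (A-B) l := by
    rw [hA, hB, ← zpow_sub, ordz]
  have hsq : A^2 - B^2 = (A+B)*(A-B) := by ring
  obtain ⟨c1, c2⟩ := coreAux l hl A B hcop hx hy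
  have hDl : Int.gcd ((A+B)*(A-B)) l ∣ l := hdl _
  have hD0 : 0 < Int.gcd ((A+B)*(A-B)) l := Nat.pos_of_ne_zero (by
    intro h
    exact hl.ne' (Nat.eq_zero_of_gcd_eq_zero_right (m := ((A+B)*(A-B)).natAbs) (by simpa [Int.gcd] using h)))
  have hlsq : ∀ (c : ℕ), Int.gcd (A+B) l * Int.gcd (A-B) l = c →
      l^2 = (l / Int.gcd (A+B) l * (l / Int.gcd (A-B) l)) * c := by
    intro c hc
    rw [← hc]
    have e1 : l / Int.gcd (A+B) l * Int.gcd (A+B) l = l := Nat.div_mul_cancel (hdl _)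
    have e2 : l / Int.gcd (A-B) l * Int.gcd (A-B) l = l := Nat.div_mul_cancel (hdl _)
    calc l^2 = (l / Int.gcd (A+B) l * Int.gcd (A+B) l) * (l / Int.gcd (A-B) l * Int.gcd (A-B) l) := by
          rw [e1, e2]; ring
      _ = l / Int.gcd (A+B) l * (l / Int.gcd (A-B) l) * (Int.gcd (A+B) l * Int.gcd (A-B) l) := by ring
  constructor
  · intro h
    rw [hn, hoab, hoab'] at h
    have hc := c1 h
    rw [hsq, hoab, hoab']
    rw [hlsq _ hc, Nat.mul_div_cancel _ hD0]
  · intro h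
    rw [hn, hoab, hoab'] at h
    have hc := c2 h
    rw [hsq, hoab, hoab']
    have : l^2 = (2 * (l / Int.gcd (A+B) l * (l / Int.gcd (A-B) l))) * Int.gcd ((A+B)*(A-B)) l := by
      rw [hlsq _ hc]; ring
    rw [this, Nat.mul_div_cancel _ hD0]
end

section
/- For every μ = (μ₁,μ₂,μ₃) ∈ (K*)³, the stated formulas define a right M₂(α,β)-module structure on V₂(μ), and V₂(μ) is a simple M₂(α,β)-module of K-dimension l₁·l₂. -/
noncomputable section

open MulOpposite

variable {K : Type*} [Field K]

/-- `l₂ := ord(αβ⁻¹)`. -/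
def l2 (α β : K) : ℕ := orderOf (α * β⁻¹)

open Classical in
/-- `l₁ := ord(αβ)` if `ord(β) ∣ ord(αβ)·ord(αβ⁻¹)`, and `l₁ := 2·ord(αβ)` otherwise. -/
def l1 (α β : K) : ℕ :=
  if orderOf β ∣ orderOf (α * β) * orderOf (α * β⁻¹) then orderOf (α * β)
  else 2 * orderOf (α * β)

/-- The underlying vector space of the modules `V₁(μ)` and `V₂(μ)`. -/
abbrev V12 (α β : K) : Type _ := (ZMod (l1 α β) × ZMod (l2 α β)) → K

/-- The underlying vector space of the module `V₃(μ)`. -/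
abbrev V3 (α β : K) : Type _ := (ZMod (orderOf (α * β)) × ZMod (l2 α β)) → K

/-- The basis vectors `e(a,b)` of `V₁(μ)` and `V₂(μ)`. -/
def e12 (α β : K) (a : ZMod (l1 α β)) (b : ZMod (l2 α β)) : V12 α β := Pi.single (a, b) 1

/-- The basis vectors `e(a,b)` of `V₃(μ)`. -/
def e3 (α β : K) (a : ZMod (orderOf (α * β))) (b : ZMod (l2 α β)) : V3 α β := Pi.single (a, b) 1

/-- `ρ` is the representation of `M₂(α,β)` on `V₁(μ₁,μ₂,μ₃,μ₄)` (a right module,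
presented as a `K`-algebra map from the opposite algebra to endomorphisms),
given on the basis `e(a,b)`, `0 ≤ a ≤ l₁−1`, `0 ≤ b ≤ l₂−1`, by the formulas:
`e(a,b)X₁₁ = μ₁β^b e(a⊕1,b)`;
`e(a,b)X₁₂ = μ₂⁻¹μ₃(α⁻¹β)^b(αβ)^{−a} e(a,b−1)` if `b ≠ 0`,
  `e(a,0)X₁₂ = μ₂⁻¹μ₃β^{al₂}(αβ)^{−a} e(a,l₂−1)`;
`e(a,b)X₂₁ = μ₂ e(a,b+1)` if `b ≠ l₂−1`, `e(a,l₂−1)X₂₁ = μ₂β^{−al₂} e(a,0)`;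
`e(a,b)X₂₂ = μ₁⁻¹α^{−b}(μ₄ + β(αβ)^{−a}μ₃) e(a⊖1,b)`,
with index arithmetic modulo `l₁` (first slot) and `l₂` (second slot). -/
def IsV1Rep (α β μ₁ μ₂ μ₃ μ₄ : K)
    (ρ : (QM α β)ᵐᵒᵖ →ₐ[K] Module.End K (V12 α β)) : Prop :=
  (∀ a b, ρ (op (X11 α β)) (e12 α β a b) = (μ₁ * β ^ b.val) • e12 α β (a + 1) b) ∧
  (∀ a b, ρ (op (X12 α β)) (e12 α β a b) =
    (if b = 0 then μ₂⁻¹ * μ₃ * β ^ (a.val * l2 α β) * ((α * β) ^ a.val)⁻¹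
      else μ₂⁻¹ * μ₃ * (α⁻¹ * β) ^ b.val * ((α * β) ^ a.val)⁻¹) • e12 α β a (b - 1)) ∧
  (∀ a b, ρ (op (X21 α β)) (e12 α β a b) =
    (if b.val = l2 α β - 1 then μ₂ * (β ^ (a.val * l2 α β))⁻¹ else μ₂) • e12 α β a (b + 1)) ∧
  (∀ a b, ρ (op (X22 α β)) (e12 α β a b) =
    (μ₁⁻¹ * (α ^ b.val)⁻¹ * (μ₄ + β * ((α * β) ^ a.val)⁻¹ * μ₃)) • e12 α β (a - 1) b)

/-- `ρ` is the representation of `M₂(α,β)` on `V₂(μ₁,μ₂,μ₃)` given on the basis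
`e(a,b)` by:
`e(a,b)X₁₁ = μ₁⁻¹μ₃α⁻¹(α⁻¹β)^b((αβ)^a − 1) e(a−1,b)` if `a ≠ 0`, `e(0,b)X₁₁ = 0`;
`e(a,b)X₁₂ = μ₂⁻¹μ₃β^a(α⁻¹β)^b e(a,b∔(−1))`;
`e(a,b)X₂₁ = μ₂α^a e(a,b∔1)`;
`e(a,b)X₂₂ = μ₁ e(a+1,b)` if `a ≠ l₁−1`, `e(l₁−1,b)X₂₂ = μ₁α^{−bl₁} e(0,b)`. -/
def IsV2Rep (α β μ₁ μ₂ μ₃ : K)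
    (ρ : (QM α β)ᵐᵒᵖ →ₐ[K] Module.End K (V12 α β)) : Prop :=
  (∀ a b, ρ (op (X11 α β)) (e12 α β a b) =
    (if a = 0 then 0
      else μ₁⁻¹ * μ₃ * α⁻¹ * (α⁻¹ * β) ^ b.val * ((α * β) ^ a.val - 1)) • e12 α β (a - 1) b) ∧
  (∀ a b, ρ (op (X12 α β)) (e12 α β a b) =
    (μ₂⁻¹ * μ₃ * β ^ a.val * (α⁻¹ * β) ^ b.val) • e12 α β a (b - 1)) ∧
  (∀ a b, ρ (op (X21 α β)) (e12 α β a b) = (μ₂ * α ^ a.val) • e12 α β a (b + 1)) ∧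
  (∀ a b, ρ (op (X22 α β)) (e12 α β a b) =
    (if a.val = l1 α β - 1 then μ₁ * (α ^ (b.val * l1 α β))⁻¹ else μ₁) • e12 α β (a + 1) b)

/-- `ρ` is the representation of `M₂(α,β)` on `V₃(μ₁,μ₂)` given on the basis
`e(a,b)`, `0 ≤ a ≤ ord(αβ)−1`, `0 ≤ b ≤ l₂−1`, by:
`e(a,b)X₁₁ = μ₂α⁻¹(α⁻¹β)^b((αβ)^a − 1) e(a−1,b)` if `a ≠ 0`, `e(0,b)X₁₁ = 0`;
`e(a,b)X₁₂ = μ₁⁻¹μ₂β^a(α⁻¹β)^b e(a,b∔(−1))`;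
`e(a,b)X₂₁ = μ₁α^a e(a,b∔1)`;
`e(a,b)X₂₂ = e(a+1,b)` if `a ≠ ord(αβ)−1`, `e(ord(αβ)−1,b)X₂₂ = 0`. -/
def IsV3Rep (α β μ₁ μ₂ : K)
    (ρ : (QM α β)ᵐᵒᵖ →ₐ[K] Module.End K (V3 α β)) : Prop :=
  (∀ a b, ρ (op (X11 α β)) (e3 α β a b) =
    (if a = 0 then 0
      else μ₂ * α⁻¹ * (α⁻¹ * β) ^ b.val * ((α * β) ^ a.val - 1)) • e3 α β (a - 1) b) ∧
  (∀ a b, ρ (op (X12 α β)) (e3 α β a b) =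
    (μ₁⁻¹ * μ₂ * β ^ a.val * (α⁻¹ * β) ^ b.val) • e3 α β a (b - 1)) ∧
  (∀ a b, ρ (op (X21 α β)) (e3 α β a b) = (μ₁ * α ^ a.val) • e3 α β a (b + 1)) ∧
  (∀ a b, ρ (op (X22 α β)) (e3 α β a b) =
    if a.val = orderOf (α * β) - 1 then 0 else e3 α β (a + 1) b)


namespace QMaux

lemma cast_val {n : ℕ} [NeZero n] (x : ZMod n) : ((x.val : ℕ) : ZMod n) = x :=
  ZMod.natCast_rightInverse x

lemma pow_mod_eq {n : ℕ} (ξ : K) (h : ξ ^ n = 1) (k : ℕ) : ξ ^ (k % n) = ξ ^ k := by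
  conv_rhs => rw [← Nat.div_add_mod k n]
  rw [pow_add, pow_mul, h, one_pow, one_mul]

lemma zmod_pow_val_add {n : ℕ} [NeZero n] (ξ : K) (h : ξ ^ n = 1) (x y : ZMod n) :
    ξ ^ ((x + y).val) = ξ ^ x.val * ξ ^ y.val := by
  rw [ZMod.val_add, pow_mod_eq ξ h, pow_add]

lemma pow_mul_mod_eq {n m : ℕ} (ξ : K) (h : ξ ^ (m * n) = 1) (k : ℕ) :
    ξ ^ ((k % n) * m) = ξ ^ (k * m) := by
  have hk : k * m = (k % n) * m + (m * n) * (k / n) := by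
    conv_lhs => rw [← Nat.div_add_mod k n]
    ring
  rw [hk, pow_add, pow_mul ξ (m * n), h, one_pow, mul_one]

lemma zmod_pow_val_add_mul {n m : ℕ} [NeZero n] (ξ : K) (h : ξ ^ (m * n) = 1) (x y : ZMod n) :
    ξ ^ ((x + y).val * m) = ξ ^ (x.val * m) * ξ ^ (y.val * m) := by
  rw [ZMod.val_add, pow_mul_mod_eq ξ h, add_mul, pow_add]

lemma zmod_val_add_one {n : ℕ} [NeZero n] {x : ZMod n} (h : x + 1 ≠ 0) :
    (x + 1).val = x.val + 1 := by
  have hlt : x.val + 1 < n := by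
    rcases eq_or_lt_of_le (Nat.succ_le_of_lt (ZMod.val_lt x)) with he | hl
    · exfalso; apply h
      have hx : x + 1 = ((x.val + 1 : ℕ) : ZMod n) := by push_cast [cast_val]; ring
      rw [hx, show x.val + 1 = n from he, ZMod.natCast_self]
    · exact hl
  have hx : x + 1 = ((x.val + 1 : ℕ) : ZMod n) := by push_cast [cast_val]; ring
  rw [hx, ZMod.val_natCast, Nat.mod_eq_of_lt hlt]

lemma zmod_val_sub_one {n : ℕ} [NeZero n] {x : ZMod n} (h : x ≠ 0) :
    x.val = (x - 1).val + 1 := by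
  have := zmod_val_add_one (n := n) (x := x - 1) (by simpa using h)
  simpa using this

lemma zmod_val_neg_one {n : ℕ} [NeZero n] : (-1 : ZMod n).val = n - 1 := by
  have hn : 1 ≤ n := Nat.one_le_iff_ne_zero.mpr (NeZero.ne n)
  have h : (-1 : ZMod n) = ((n - 1 : ℕ) : ZMod n) := by
    push_cast [Nat.cast_sub hn]
    simp
  rw [h, ZMod.val_natCast, Nat.mod_eq_of_lt (by omega)]

lemma zmod_eq_neg_one_of_val {n : ℕ} [NeZero n] {x : ZMod n} (h : x.val = n - 1) :
    x = -1 := by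
  have : x = ((x.val : ℕ) : ZMod n) := (cast_val x).symm
  rw [this, h]
  have hn : 1 ≤ n := Nat.one_le_iff_ne_zero.mpr (NeZero.ne n)
  push_cast [Nat.cast_sub hn]
  simp

lemma pow_inj_of_le {ξ : K} (hξ : ξ ≠ 0) {i j : ℕ} (hj : j < orderOf ξ)
    (h : ξ ^ i = ξ ^ j) (hij : i ≤ j) : i = j := by
  have h1 : ξ ^ i * ξ ^ (j - i) = ξ ^ i * 1 := by
    rw [← pow_add, Nat.add_sub_cancel' hij, mul_one, h]
  have h2 : ξ ^ (j - i) = 1 := mul_left_cancel₀ (pow_ne_zero _ hξ) h1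
  have hd := orderOf_dvd_of_pow_eq_one h2
  rcases Nat.eq_zero_or_pos (j - i) with h0 | hp
  · omega
  · have := Nat.le_of_dvd hp hd; omega

lemma pow_inj_of_lt_orderOf {ξ : K} (hξ : ξ ≠ 0) {i j : ℕ} (hi : i < orderOf ξ)
    (hj : j < orderOf ξ) (h : ξ ^ i = ξ ^ j) : i = j := by
  rcases le_total i j with hij | hij
  · exact pow_inj_of_le hξ hj h hij
  · exact (pow_inj_of_le hξ hi h.symm hij).symm

lemma orderOf_inv' (x : K) : orderOf x⁻¹ = orderOf x := by
  apply dvd_antisymm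
  · exact orderOf_dvd_of_pow_eq_one (by rw [inv_pow, pow_orderOf_eq_one, inv_one])
  · apply orderOf_dvd_of_pow_eq_one
    have : (x⁻¹ ^ orderOf x⁻¹)⁻¹ = 1 := by rw [pow_orderOf_eq_one, inv_one]
    rwa [inv_pow, inv_inv] at this

lemma pow_val_one {n : ℕ} [NeZero n] (ξ : K) (h : ξ ^ n = 1) : ξ ^ ((1 : ZMod n).val) = ξ := by
  rcases Nat.lt_or_ge n 2 with h2 | h2
  · have hn : n = 1 := by have := NeZero.ne n; omega
    subst hn
    have : ξ = 1 := by simpa using h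
    simp [this]
  · haveI : Fact (1 < n) := ⟨h2⟩
    rw [ZMod.val_one, pow_one]

lemma zmod_pow_val_succ {n : ℕ} [NeZero n] (ξ : K) (h : ξ ^ n = 1) (x : ZMod n) :
    ξ ^ ((x + 1).val) = ξ ^ x.val * ξ := by
  rw [zmod_pow_val_add ξ h x 1, pow_val_one ξ h]

lemma pow_val_one_mul {n m : ℕ} [NeZero n] (ξ : K) (h : ξ ^ (m * n) = 1) :
    ξ ^ ((1 : ZMod n).val * m) = ξ ^ m := by
  rcases Nat.lt_or_ge n 2 with h2 | h2
  · have hn : n = 1 := by have := NeZero.ne n; omega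
    subst hn
    have hm : ξ ^ m = 1 := by simpa using h
    rw [show ((1 : ZMod 1).val) = 0 from rfl, zero_mul, pow_zero, hm]
  · haveI : Fact (1 < n) := ⟨h2⟩
    rw [ZMod.val_one, one_mul]

lemma zmod_pow_val_succ_mul {n m : ℕ} [NeZero n] (ξ : K) (h : ξ ^ (m * n) = 1) (x : ZMod n) :
    ξ ^ ((x + 1).val * m) = ξ ^ (x.val * m) * ξ ^ m := by
  rw [zmod_pow_val_add_mul ξ h x 1, pow_val_one_mul ξ h]

lemma pow_orderOf_sub_one {ξ : K} (hξ : ξ ≠ 0) {n : ℕ} (hn : 0 < n) (h : ξ ^ n = 1) :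
    ξ ^ (n - 1) = ξ⁻¹ := by
  field_simp
  rw [← pow_succ, Nat.sub_add_cancel hn]
  exact h

end QMaux

open QMaux

/-! ### The operators -/

abbrev Idx (α β : K) := ZMod (l1 α β) × ZMod (l2 α β)

def c11 (α β μ₁ μ₃ : K) (a : ZMod (l1 α β)) (b : ZMod (l2 α β)) : K :=
  if a = 0 then 0 else μ₁⁻¹ * μ₃ * α⁻¹ * (α⁻¹ * β) ^ b.val * ((α * β) ^ a.val - 1)

def c12 (α β μ₂ μ₃ : K) (a : ZMod (l1 α β)) (b : ZMod (l2 α β)) : K :=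
  μ₂⁻¹ * μ₃ * β ^ a.val * (α⁻¹ * β) ^ b.val

def c21 (α β μ₂ : K) (a : ZMod (l1 α β)) : K := μ₂ * α ^ a.val

def c22 (α β μ₁ : K) (a : ZMod (l1 α β)) (b : ZMod (l2 α β)) : K :=
  if a.val = l1 α β - 1 then μ₁ * (α ^ (b.val * l1 α β))⁻¹ else μ₁

def mshift (α β : K) (c : Idx α β → K) (g : Idx α β → Idx α β) : Module.End K (V12 α β) where
  toFun f := fun p => c p * f (g p)
  map_add' f₁ f₂ := by funext p; simp [mul_add]
  map_smul' k f := by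
    funext p; simp only [Pi.smul_apply, smul_eq_mul, RingHom.id_apply]; ring

@[simp] lemma mshift_apply (α β : K) (c : Idx α β → K) (g : Idx α β → Idx α β) (f : V12 α β)
    (p : Idx α β) : mshift α β c g f p = c p * f (g p) := rfl

def T11 (α β μ₁ μ₃ : K) : Module.End K (V12 α β) :=
  mshift α β (fun p => c11 α β μ₁ μ₃ (p.1 + 1) p.2) (fun p => (p.1 + 1, p.2))
def T12 (α β μ₂ μ₃ : K) : Module.End K (V12 α β) :=
  mshift α β (fun p => c12 α β μ₂ μ₃ p.1 (p.2 + 1)) (fun p => (p.1, p.2 + 1))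
def T21 (α β μ₂ : K) : Module.End K (V12 α β) :=
  mshift α β (fun p => c21 α β μ₂ p.1) (fun p => (p.1, p.2 - 1))
def T22 (α β μ₁ : K) : Module.End K (V12 α β) :=
  mshift α β (fun p => c22 α β μ₁ (p.1 - 1) p.2) (fun p => (p.1 - 1, p.2))

section Scalar

variable {α β μ₁ μ₂ μ₃ : K}

lemma zmod_ne_top_of_add_one_ne {n : ℕ} [NeZero n] {x : ZMod n} (h : x + 1 ≠ 0) :
    x.val ≠ n - 1 := fun hv => h (by rw [zmod_eq_neg_one_of_val hv, neg_add_cancel])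

lemma S1 [NeZero (l1 α β)] [NeZero (l2 α β)] (hα : α ≠ 0)
    (h2 : (α⁻¹ * β) ^ l2 α β = 1) (a : ZMod (l1 α β)) (b : ZMod (l2 α β)) :
    c11 α β μ₁ μ₃ (a + 1) b * c12 α β μ₂ μ₃ (a + 1) (b + 1) =
      α * (c12 α β μ₂ μ₃ a (b + 1) * c11 α β μ₁ μ₃ (a + 1) (b + 1)) := by
  by_cases h : a + 1 = 0
  · simp [c11, h]
  · simp only [c11, c12, if_neg h]
    rw [zmod_val_add_one h, zmod_pow_val_succ _ h2 b]
    generalize hW : (α⁻¹ * β) ^ b.val = W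
    field_simp
    ring

lemma S2 [NeZero (l1 α β)] [NeZero (l2 α β)] (hα : α ≠ 0)
    (h2 : (α⁻¹ * β) ^ l2 α β = 1) (a : ZMod (l1 α β)) (b : ZMod (l2 α β)) :
    c11 α β μ₁ μ₃ (a + 1) b * c21 α β μ₂ (a + 1) =
      β * (c21 α β μ₂ a * c11 α β μ₁ μ₃ (a + 1) (b - 1)) := by
  by_cases h : a + 1 = 0
  · simp [c11, h]
  · simp only [c11, c21, if_neg h]
    rw [zmod_val_add_one h]
    have hb : (α⁻¹ * β) ^ b.val = (α⁻¹ * β) ^ ((b - 1).val) * (α⁻¹ * β) := by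
      conv_lhs => rw [show b = b - 1 + 1 by ring]
      exact zmod_pow_val_succ _ h2 (b - 1)
    rw [hb]
    generalize hW : (α⁻¹ * β) ^ (b - 1).val = W
    field_simp
    ring

lemma S3 [NeZero (l1 α β)] [NeZero (l2 α β)] (hα : α ≠ 0)
    (h3a : α ^ (l1 α β * l2 α β) = 1) (hn1 : 2 ≤ l1 α β)
    (a : ZMod (l1 α β)) (b : ZMod (l2 α β)) :
    c21 α β μ₂ a * c22 α β μ₁ (a - 1) (b - 1) =
      α * (c22 α β μ₁ (a - 1) b * c21 α β μ₂ (a - 1)) := by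
  by_cases h : a = 0
  · have hv : (a - 1).val = l1 α β - 1 := by
      rw [h, zero_sub, zmod_val_neg_one]
    have ha0 : a.val = 0 := by rw [h, ZMod.val_zero]
    simp only [c21, c22, if_pos hv]
    have key : α ^ (b.val * l1 α β) = α ^ ((b - 1).val * l1 α β) * α ^ (l1 α β) := by
      conv_lhs => rw [show b = b - 1 + 1 by ring]
      exact zmod_pow_val_succ_mul α h3a (b - 1)
    have hpow : α ^ (l1 α β - 1) = α ^ (l1 α β) * α⁻¹ := by
      field_simp
      rw [← pow_succ, Nat.sub_add_cancel (by omega)]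
    rw [hv, key, hpow, ha0, pow_zero]
    field_simp
  · have hv : (a - 1).val ≠ l1 α β - 1 := by
      have hs := zmod_val_sub_one h
      have hlt := ZMod.val_lt a
      omega
    simp only [c21, c22, if_neg hv]
    rw [zmod_val_sub_one h, pow_succ]
    ring

lemma S4 [NeZero (l1 α β)] [NeZero (l2 α β)] (hα : α ≠ 0) (hβ : β ≠ 0) (hμ₂ : μ₂ ≠ 0)
    (h1 : (α * β) ^ l1 α β = 1) (h3a : α ^ (l1 α β * l2 α β) = 1) (hn1 : 2 ≤ l1 α β)
    (a : ZMod (l1 α β)) (b : ZMod (l2 α β)) :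
    c12 α β μ₂ μ₃ a (b + 1) * c22 α β μ₁ (a - 1) (b + 1) =
      β * (c22 α β μ₁ (a - 1) b * c12 α β μ₂ μ₃ (a - 1) (b + 1)) := by
  by_cases h : a = 0
  · have hv : (a - 1).val = l1 α β - 1 := by rw [h, zero_sub, zmod_val_neg_one]
    have ha0 : a.val = 0 := by rw [h, ZMod.val_zero]
    simp only [c12, c22, if_pos hv]
    have hβn1 : β ^ (l1 α β) = (α ^ (l1 α β))⁻¹ :=
      eq_inv_of_mul_eq_one_left (by rw [← mul_pow, mul_comm β α]; exact h1)
    have hβm1 : β ^ (l1 α β - 1) = (α ^ (l1 α β))⁻¹ * β⁻¹ := by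
      rw [← hβn1]
      field_simp
      rw [← pow_succ, Nat.sub_add_cancel (by omega)]
    rw [hv, zmod_pow_val_succ_mul α h3a b, hβm1, ha0, pow_zero]
    generalize hW : (α⁻¹ * β) ^ (b + 1).val = W
    field_simp
  · have hv : (a - 1).val ≠ l1 α β - 1 := by
      have hs := zmod_val_sub_one h
      have hlt := ZMod.val_lt a
      omega
    simp only [c12, c22, if_neg hv]
    rw [zmod_val_sub_one h, pow_succ]
    ring

lemma S5 [NeZero (l1 α β)] [NeZero (l2 α β)] (hα : α ≠ 0)
    (h2 : (α⁻¹ * β) ^ l2 α β = 1) (a : ZMod (l1 α β)) (b : ZMod (l2 α β)) :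
    c12 α β μ₂ μ₃ a (b + 1) * c21 α β μ₂ a =
      (β * α⁻¹) * (c21 α β μ₂ a * c12 α β μ₂ μ₃ a b) := by
  simp only [c12, c21]
  rw [zmod_pow_val_succ _ h2 b]
  generalize hW : (α⁻¹ * β) ^ b.val = W
  field_simp

lemma S6 [NeZero (l1 α β)] [NeZero (l2 α β)] (hα : α ≠ 0) (hβ : β ≠ 0)
    (hμ₁ : μ₁ ≠ 0) (hμ₂ : μ₂ ≠ 0)
    (h1 : (α * β) ^ l1 α β = 1) (hn1 : 2 ≤ l1 α β)
    (a : ZMod (l1 α β)) (b : ZMod (l2 α β)) :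
    c11 α β μ₁ μ₃ (a + 1) b * c22 α β μ₁ a b =
      c22 α β μ₁ (a - 1) b * c11 α β μ₁ μ₃ a b +
        (β - α⁻¹) * (c21 α β μ₂ a * c12 α β μ₂ μ₃ a b) := by
  haveI : Fact (1 < l1 α β) := ⟨hn1⟩
  by_cases hA : a = 0
  · have hne : a + 1 ≠ 0 := by rw [hA, zero_add]; exact one_ne_zero
    have hv1 : (a + 1).val = 1 := by rw [zmod_val_add_one hne, hA, ZMod.val_zero]
    have hv0 : a.val ≠ l1 α β - 1 := by rw [hA, ZMod.val_zero]; omega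
    simp only [c11, c12, c21, c22, if_neg hne, if_pos hA, if_neg hv0]
    rw [hv1, show a.val = 0 by rw [hA, ZMod.val_zero], pow_one, pow_zero]
    generalize hW : (α⁻¹ * β) ^ b.val = W
    field_simp
    ring
  · by_cases hB : a + 1 = 0
    · have hva : a.val = l1 α β - 1 := by
        have ha : a = -1 := by rwa [add_eq_zero_iff_eq_neg] at hB
        rw [ha, zmod_val_neg_one]
      have hvam : (a - 1).val ≠ l1 α β - 1 := by
        have hs := zmod_val_sub_one hA
        omega
      simp only [c11, c12, c21, c22, if_pos hB, if_neg hA, if_neg hvam]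
      have hu : α ^ a.val * β ^ a.val * (α * β) = 1 := by
        rw [← mul_pow, ← pow_succ, hva, Nat.sub_add_cancel (by omega)]
        exact h1
      generalize hW : (α⁻¹ * β) ^ b.val = W
      field_simp
      linear_combination (-(μ₃ * W)) * hu
    · have hva : a.val ≠ l1 α β - 1 := zmod_ne_top_of_add_one_ne hB
      have hvam : (a - 1).val ≠ l1 α β - 1 := by
        have hs := zmod_val_sub_one hA
        have hlt := ZMod.val_lt a
        omega
      simp only [c11, c12, c21, c22, if_neg hA, if_neg hB, if_neg hva, if_neg hvam]
      rw [zmod_val_add_one hB, pow_succ]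
      generalize hW : (α⁻¹ * β) ^ b.val = W
      field_simp
      ring

end Scalar

section EndRel

variable {α β μ₁ μ₂ μ₃ : K}

lemma E1 [NeZero (l1 α β)] [NeZero (l2 α β)] (hα : α ≠ 0)
    (h2 : (α⁻¹ * β) ^ l2 α β = 1) :
    T11 α β μ₁ μ₃ * T12 α β μ₂ μ₃ = α • (T12 α β μ₂ μ₃ * T11 α β μ₁ μ₃) := by
  apply LinearMap.ext; intro f; funext p
  simp only [T11, T12, Module.End.mul_apply, mshift_apply, LinearMap.smul_apply, Pi.smul_apply,
    smul_eq_mul]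
  linear_combination (f (p.1 + 1, p.2 + 1)) * S1 (μ₁ := μ₁) (μ₂ := μ₂) (μ₃ := μ₃) hα h2 p.1 p.2

lemma E2 [NeZero (l1 α β)] [NeZero (l2 α β)] (hα : α ≠ 0)
    (h2 : (α⁻¹ * β) ^ l2 α β = 1) :
    T11 α β μ₁ μ₃ * T21 α β μ₂ = β • (T21 α β μ₂ * T11 α β μ₁ μ₃) := by
  apply LinearMap.ext; intro f; funext p
  simp only [T11, T21, Module.End.mul_apply, mshift_apply, LinearMap.smul_apply, Pi.smul_apply,
    smul_eq_mul]
  linear_combination (f (p.1 + 1, p.2 - 1)) * S2 (μ₁ := μ₁) (μ₂ := μ₂) (μ₃ := μ₃) hα h2 p.1 p.2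

lemma E3 [NeZero (l1 α β)] [NeZero (l2 α β)] (hα : α ≠ 0)
    (h3a : α ^ (l1 α β * l2 α β) = 1) (hn1 : 2 ≤ l1 α β) :
    T21 α β μ₂ * T22 α β μ₁ = α • (T22 α β μ₁ * T21 α β μ₂) := by
  apply LinearMap.ext; intro f; funext p
  simp only [T21, T22, Module.End.mul_apply, mshift_apply, LinearMap.smul_apply, Pi.smul_apply,
    smul_eq_mul]
  linear_combination (f (p.1 - 1, p.2 - 1)) * S3 (μ₁ := μ₁) (μ₂ := μ₂) hα h3a hn1 p.1 p.2

lemma E4 [NeZero (l1 α β)] [NeZero (l2 α β)] (hα : α ≠ 0) (hβ : β ≠ 0) (hμ₂ : μ₂ ≠ 0)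
    (h1 : (α * β) ^ l1 α β = 1) (h3a : α ^ (l1 α β * l2 α β) = 1) (hn1 : 2 ≤ l1 α β) :
    T12 α β μ₂ μ₃ * T22 α β μ₁ = β • (T22 α β μ₁ * T12 α β μ₂ μ₃) := by
  apply LinearMap.ext; intro f; funext p
  simp only [T12, T22, Module.End.mul_apply, mshift_apply, LinearMap.smul_apply, Pi.smul_apply,
    smul_eq_mul]
  linear_combination (f (p.1 - 1, p.2 + 1)) *
    S4 (μ₁ := μ₁) (μ₃ := μ₃) hα hβ hμ₂ h1 h3a hn1 p.1 p.2

lemma E5 [NeZero (l1 α β)] [NeZero (l2 α β)] (hα : α ≠ 0)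
    (h2 : (α⁻¹ * β) ^ l2 α β = 1) :
    T12 α β μ₂ μ₃ * T21 α β μ₂ = (β * α⁻¹) • (T21 α β μ₂ * T12 α β μ₂ μ₃) := by
  apply LinearMap.ext; intro f; funext p
  simp only [T12, T21, Module.End.mul_apply, mshift_apply, LinearMap.smul_apply, Pi.smul_apply,
    smul_eq_mul, add_sub_cancel_right, sub_add_cancel]
  linear_combination (f (p.1, p.2)) * S5 (μ₃ := μ₃) hα h2 p.1 p.2

lemma E6 [NeZero (l1 α β)] [NeZero (l2 α β)] (hα : α ≠ 0) (hβ : β ≠ 0)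
    (hμ₁ : μ₁ ≠ 0) (hμ₂ : μ₂ ≠ 0) (h1 : (α * β) ^ l1 α β = 1) (hn1 : 2 ≤ l1 α β) :
    T11 α β μ₁ μ₃ * T22 α β μ₁ =
      T22 α β μ₁ * T11 α β μ₁ μ₃ + (β - α⁻¹) • (T21 α β μ₂ * T12 α β μ₂ μ₃) := by
  apply LinearMap.ext; intro f; funext p
  simp only [T11, T12, T21, T22, Module.End.mul_apply, mshift_apply, LinearMap.add_apply,
    Pi.add_apply, LinearMap.smul_apply, Pi.smul_apply, smul_eq_mul, add_sub_cancel_right,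
    sub_add_cancel]
  linear_combination (f (p.1, p.2)) * S6 hα hβ hμ₁ hμ₂ h1 hn1 p.1 p.2

end EndRel

section Single

variable {α β μ₁ μ₂ μ₃ : K}

lemma mshift_single (c : Idx α β → K) (g : Idx α β → Idx α β) (j g' : Idx α β)
    (hg : ∀ p, g p = j ↔ p = g') :
    mshift α β c g (Pi.single j (1 : K) : V12 α β) = c g' • (Pi.single g' (1 : K) : V12 α β) := by
  funext p
  simp only [mshift_apply, Pi.smul_apply, smul_eq_mul, Pi.single_apply]
  by_cases hp : p = g'
  · subst hp
    rw [if_pos ((hg p).mpr rfl), if_pos rfl]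
  · rw [if_neg (fun hc => hp ((hg p).mp hc)), if_neg hp, mul_zero, mul_zero]

lemma T11_single [NeZero (l1 α β)] [NeZero (l2 α β)] (a : ZMod (l1 α β)) (b : ZMod (l2 α β)) :
    T11 α β μ₁ μ₃ (Pi.single (a, b) (1 : K) : V12 α β) = c11 α β μ₁ μ₃ a b • (Pi.single (a - 1, b) (1 : K) : V12 α β) := by
  have hg : ∀ p : Idx α β, ((p.1 + 1, p.2) : Idx α β) = (a, b) ↔ p = ((a - 1, b) : Idx α β) := by
    intro p
    constructor
    · intro h
      have h1 : p.1 + 1 = a := congrArg Prod.fst h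
      have h2 : p.2 = b := congrArg Prod.snd h
      exact Prod.ext (by rw [← h1]; ring) h2
    · rintro rfl
      show ((a - 1 + 1 : ZMod (l1 α β)), b) = (a, b)
      rw [sub_add_cancel]
  have h := mshift_single (fun p : Idx α β => c11 α β μ₁ μ₃ (p.1 + 1) p.2)
    (fun p : Idx α β => (p.1 + 1, p.2)) (a, b) (a - 1, b) hg
  rw [T11, h]
  simp only [sub_add_cancel]

lemma T12_single [NeZero (l1 α β)] [NeZero (l2 α β)] (a : ZMod (l1 α β)) (b : ZMod (l2 α β)) :
    T12 α β μ₂ μ₃ (Pi.single (a, b) (1 : K) : V12 α β) = c12 α β μ₂ μ₃ a b • (Pi.single (a, b - 1) (1 : K) : V12 α β) := by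
  have hg : ∀ p : Idx α β, ((p.1, p.2 + 1) : Idx α β) = (a, b) ↔ p = ((a, b - 1) : Idx α β) := by
    intro p
    constructor
    · intro h
      have h1 : p.1 = a := congrArg Prod.fst h
      have h2 : p.2 + 1 = b := congrArg Prod.snd h
      exact Prod.ext h1 (by rw [← h2]; ring)
    · rintro rfl
      show (a, (b - 1 + 1 : ZMod (l2 α β))) = (a, b)
      rw [sub_add_cancel]
  have h := mshift_single (fun p : Idx α β => c12 α β μ₂ μ₃ p.1 (p.2 + 1))
    (fun p : Idx α β => (p.1, p.2 + 1)) (a, b) (a, b - 1) hg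
  rw [T12, h]
  simp only [sub_add_cancel]

lemma T21_single [NeZero (l1 α β)] [NeZero (l2 α β)] (a : ZMod (l1 α β)) (b : ZMod (l2 α β)) :
    T21 α β μ₂ (Pi.single (a, b) (1 : K) : V12 α β) = c21 α β μ₂ a • (Pi.single (a, b + 1) (1 : K) : V12 α β) := by
  have hg : ∀ p : Idx α β, ((p.1, p.2 - 1) : Idx α β) = (a, b) ↔ p = ((a, b + 1) : Idx α β) := by
    intro p
    constructor
    · intro h
      have h1 : p.1 = a := congrArg Prod.fst h
      have h2 : p.2 - 1 = b := congrArg Prod.snd h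
      exact Prod.ext h1 (by rw [← h2]; ring)
    · rintro rfl
      show (a, (b + 1 - 1 : ZMod (l2 α β))) = (a, b)
      rw [add_sub_cancel_right]
  have h := mshift_single (fun p : Idx α β => c21 α β μ₂ p.1)
    (fun p : Idx α β => (p.1, p.2 - 1)) (a, b) (a, b + 1) hg
  rw [T21, h]

lemma T22_single [NeZero (l1 α β)] [NeZero (l2 α β)] (a : ZMod (l1 α β)) (b : ZMod (l2 α β)) :
    T22 α β μ₁ (Pi.single (a, b) (1 : K) : V12 α β) = c22 α β μ₁ a b • (Pi.single (a + 1, b) (1 : K) : V12 α β) := by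
  have hg : ∀ p : Idx α β, ((p.1 - 1, p.2) : Idx α β) = (a, b) ↔ p = ((a + 1, b) : Idx α β) := by
    intro p
    constructor
    · intro h
      have h1 : p.1 - 1 = a := congrArg Prod.fst h
      have h2 : p.2 = b := congrArg Prod.snd h
      exact Prod.ext (by rw [← h1]; ring) h2
    · rintro rfl
      show ((a + 1 - 1 : ZMod (l1 α β)), b) = (a, b)
      rw [add_sub_cancel_right]
  have h := mshift_single (fun p : Idx α β => c22 α β μ₁ (p.1 - 1) p.2)
    (fun p : Idx α β => (p.1 - 1, p.2)) (a, b) (a + 1, b) hg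
  rw [T22, h]
  simp only [add_sub_cancel_right]

end Single

section Alg

variable (α β μ₁ μ₂ μ₃ : K)

def phi : FreeAlgebra K (Fin 4) →ₐ[K] (Module.End K (V12 α β))ᵐᵒᵖ :=
  FreeAlgebra.lift K
    (fun i => op (![T11 α β μ₁ μ₃, T12 α β μ₂ μ₃, T21 α β μ₂, T22 α β μ₁] i))

lemma phi_ι0 : phi α β μ₁ μ₂ μ₃ (FreeAlgebra.ι K 0) = op (T11 α β μ₁ μ₃) := by
  rw [phi, FreeAlgebra.lift_ι_apply]; rfl
lemma phi_ι1 : phi α β μ₁ μ₂ μ₃ (FreeAlgebra.ι K 1) = op (T12 α β μ₂ μ₃) := by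
  rw [phi, FreeAlgebra.lift_ι_apply]; rfl
lemma phi_ι2 : phi α β μ₁ μ₂ μ₃ (FreeAlgebra.ι K 2) = op (T21 α β μ₂) := by
  rw [phi, FreeAlgebra.lift_ι_apply]; rfl
lemma phi_ι3 : phi α β μ₁ μ₂ μ₃ (FreeAlgebra.ι K 3) = op (T22 α β μ₁) := by
  rw [phi, FreeAlgebra.lift_ι_apply]; rfl

variable {α β μ₁ μ₂ μ₃}

lemma phi_rel [NeZero (l1 α β)] [NeZero (l2 α β)] (hα : α ≠ 0) (hβ : β ≠ 0)
    (hμ₁ : μ₁ ≠ 0) (hμ₂ : μ₂ ≠ 0)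
    (h1 : (α * β) ^ l1 α β = 1) (h2 : (α⁻¹ * β) ^ l2 α β = 1)
    (h3a : α ^ (l1 α β * l2 α β) = 1) (hn1 : 2 ≤ l1 α β) :
    ∀ ⦃x y⦄, QMRel α β x y → phi α β μ₁ μ₂ μ₃ x = phi α β μ₁ μ₂ μ₃ y := by
  intro x y h
  cases h with
  | r12_11 =>
      rw [map_mul, map_smul, map_mul, phi_ι0, phi_ι1, ← op_mul, ← op_mul, ← op_smul]
      exact congrArg op (E1 hα h2)
  | r21_11 =>
      rw [map_mul, map_smul, map_mul, phi_ι0, phi_ι2, ← op_mul, ← op_mul, ← op_smul]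
      exact congrArg op (E2 hα h2)
  | r22_21 =>
      rw [map_mul, map_smul, map_mul, phi_ι2, phi_ι3, ← op_mul, ← op_mul, ← op_smul]
      exact congrArg op (E3 hα h3a hn1)
  | r22_12 =>
      rw [map_mul, map_smul, map_mul, phi_ι1, phi_ι3, ← op_mul, ← op_mul, ← op_smul]
      exact congrArg op (E4 hα hβ hμ₂ h1 h3a hn1)
  | r21_12 =>
      rw [map_mul, map_smul, map_mul, phi_ι1, phi_ι2, ← op_mul, ← op_mul, ← op_smul]
      exact congrArg op (E5 hα h2)
  | r22_11 =>
      rw [map_mul, map_add, map_mul, map_smul, map_mul, phi_ι0, phi_ι1, phi_ι2, phi_ι3,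
        ← op_mul, ← op_mul, ← op_mul, ← op_smul, ← op_add]
      exact congrArg op (E6 hα hβ hμ₁ hμ₂ h1 hn1)

variable (α β μ₁ μ₂ μ₃)

def rho (hrel : ∀ ⦃x y⦄, QMRel α β x y → phi α β μ₁ μ₂ μ₃ x = phi α β μ₁ μ₂ μ₃ y) :
    (QM α β)ᵐᵒᵖ →ₐ[K] Module.End K (V12 α β) where
  toFun x := unop (RingQuot.liftAlgHom K ⟨phi α β μ₁ μ₂ μ₃, hrel⟩ (unop x))
  map_one' := by simp
  map_mul' x y := by simp
  map_zero' := by simp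
  map_add' x y := by simp
  commutes' r := by
    simp [MulOpposite.algebraMap_apply, AlgHom.commutes]

variable {α β μ₁ μ₂ μ₃}

lemma rho_X11 (hrel : ∀ ⦃x y⦄, QMRel α β x y → phi α β μ₁ μ₂ μ₃ x = phi α β μ₁ μ₂ μ₃ y) :
    rho α β μ₁ μ₂ μ₃ hrel (op (X11 α β)) = T11 α β μ₁ μ₃ := by
  show unop (RingQuot.liftAlgHom K ⟨phi α β μ₁ μ₂ μ₃, hrel⟩ (unop (op (X11 α β)))) = _
  rw [unop_op, X11, RingQuot.liftAlgHom_mkAlgHom_apply, phi_ι0, unop_op]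

lemma rho_X12 (hrel : ∀ ⦃x y⦄, QMRel α β x y → phi α β μ₁ μ₂ μ₃ x = phi α β μ₁ μ₂ μ₃ y) :
    rho α β μ₁ μ₂ μ₃ hrel (op (X12 α β)) = T12 α β μ₂ μ₃ := by
  show unop (RingQuot.liftAlgHom K ⟨phi α β μ₁ μ₂ μ₃, hrel⟩ (unop (op (X12 α β)))) = _
  rw [unop_op, X12, RingQuot.liftAlgHom_mkAlgHom_apply, phi_ι1, unop_op]

lemma rho_X21 (hrel : ∀ ⦃x y⦄, QMRel α β x y → phi α β μ₁ μ₂ μ₃ x = phi α β μ₁ μ₂ μ₃ y) :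
    rho α β μ₁ μ₂ μ₃ hrel (op (X21 α β)) = T21 α β μ₂ := by
  show unop (RingQuot.liftAlgHom K ⟨phi α β μ₁ μ₂ μ₃, hrel⟩ (unop (op (X21 α β)))) = _
  rw [unop_op, X21, RingQuot.liftAlgHom_mkAlgHom_apply, phi_ι2, unop_op]

lemma rho_X22 (hrel : ∀ ⦃x y⦄, QMRel α β x y → phi α β μ₁ μ₂ μ₃ x = phi α β μ₁ μ₂ μ₃ y) :
    rho α β μ₁ μ₂ μ₃ hrel (op (X22 α β)) = T22 α β μ₁ := by
  show unop (RingQuot.liftAlgHom K ⟨phi α β μ₁ μ₂ μ₃, hrel⟩ (unop (op (X22 α β)))) = _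
  rw [unop_op, X22, RingQuot.liftAlgHom_mkAlgHom_apply, phi_ι3, unop_op]

end Alg

section Facts

variable {α β : K}

lemma fin_mul (hoα : 0 < orderOf α) (hoβ : 0 < orderOf β) : 0 < orderOf (α * β) :=
  orderOf_pos_iff.mpr ((orderOf_pos_iff.mp hoα).mul (orderOf_pos_iff.mp hoβ))

lemma fin_inv (hβ : β ≠ 0) (hoβ : 0 < orderOf β) : 0 < orderOf β⁻¹ := by
  rw [orderOf_inv']; exact hoβ

lemma l2_pos (hβ : β ≠ 0) (hoα : 0 < orderOf α) (hoβ : 0 < orderOf β) : 0 < l2 α β :=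
  fin_mul hoα (fin_inv hβ hoβ)

lemma m_two (hoα : 0 < orderOf α) (hoβ : 0 < orderOf β) (hab : α * β ≠ 1) :
    2 ≤ orderOf (α * β) := by
  have h := fin_mul hoα hoβ
  rcases Nat.lt_or_ge (orderOf (α * β)) 2 with h2 | h2
  · exfalso
    have : orderOf (α * β) = 1 := by omega
    exact hab (orderOf_eq_one_iff.mp this)
  · exact h2

lemma l1_two (hoα : 0 < orderOf α) (hoβ : 0 < orderOf β) (hab : α * β ≠ 1) :
    2 ≤ l1 α β := by
  have h := m_two hoα hoβ hab
  unfold l1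
  split_ifs <;> omega

lemma h1_pow : (α * β) ^ l1 α β = 1 := by
  apply orderOf_dvd_iff_pow_eq_one.mp
  unfold l1
  split_ifs
  · exact dvd_refl _
  · exact dvd_mul_left _ _

lemma h2_pow (hα : α ≠ 0) : (α⁻¹ * β) ^ l2 α β = 1 := by
  have h : α⁻¹ * β = (α * β⁻¹)⁻¹ := by rw [mul_inv, inv_inv]
  rw [h, inv_pow, l2, pow_orderOf_eq_one, inv_one]

lemma h3b_pow (hα : α ≠ 0) : β ^ (l1 α β * l2 α β) = 1 := by
  by_cases hc : orderOf β ∣ orderOf (α * β) * orderOf (α * β⁻¹)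
  · have hl : l1 α β = orderOf (α * β) := by unfold l1; rw [if_pos hc]
    rw [hl]
    exact orderOf_dvd_iff_pow_eq_one.mp hc
  · have hl : l1 α β = 2 * orderOf (α * β) := by unfold l1; rw [if_neg hc]
    rw [hl]
    have hββ : β ^ 2 = (α * β) * (α⁻¹ * β) := by
      field_simp
    rw [show 2 * orderOf (α * β) * l2 α β = 2 * (orderOf (α * β) * l2 α β) by ring,
      pow_mul β 2, hββ, mul_pow, pow_mul, pow_orderOf_eq_one, one_pow, one_mul,
      mul_comm (orderOf (α * β)) (l2 α β), pow_mul, h2_pow hα, one_pow]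

lemma h3a_pow (hα : α ≠ 0) : α ^ (l1 α β * l2 α β) = 1 := by
  have h : α ^ (l1 α β * l2 α β) * β ^ (l1 α β * l2 α β) = 1 := by
    rw [← mul_pow, pow_mul, h1_pow, one_pow]
  rwa [h3b_pow hα, mul_one] at h

end Facts

section Sep

variable (α β μ₁ μ₂ μ₃ : K)

def lam (p : Idx α β) : K := c21 α β μ₂ p.1 * c12 α β μ₂ μ₃ p.1 (p.2 + 1)
def nuf (p : Idx α β) : K := c11 α β μ₁ μ₃ p.1 p.2 * c22 α β μ₁ (p.1 - 1) p.2
def sig (p : Idx α β) : K := (c21 α β μ₂ p.1) ^ (l2 α β)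

variable {α β μ₁ μ₂ μ₃}

lemma lam_eq [NeZero (l1 α β)] [NeZero (l2 α β)] (hα : α ≠ 0) (hμ₂ : μ₂ ≠ 0)
    (h2 : (α⁻¹ * β) ^ l2 α β = 1) (p : Idx α β) :
    lam α β μ₂ μ₃ p =
      (μ₃ * (α⁻¹ * β)) * ((α * β) ^ p.1.val * (α⁻¹ * β) ^ p.2.val) := by
  rw [lam, c21, c12, zmod_pow_val_succ _ h2 p.2]
  field_simp
  ring

lemma nuf_eq [NeZero (l1 α β)] [NeZero (l2 α β)] (hμ₁ : μ₁ ≠ 0) (hn1 : 2 ≤ l1 α β)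
    (p : Idx α β) :
    nuf α β μ₁ μ₃ p =
      (μ₃ * α⁻¹) * ((α⁻¹ * β) ^ p.2.val * ((α * β) ^ p.1.val - 1)) := by
  rw [nuf, c11, c22]
  by_cases h : p.1 = 0
  · rw [if_pos h, zero_mul, h, ZMod.val_zero, pow_zero, sub_self, mul_zero, mul_zero]
  · have hv : (p.1 - 1).val ≠ l1 α β - 1 := by
      have hs := zmod_val_sub_one h
      have hlt := ZMod.val_lt p.1
      omega
    rw [if_neg h, if_neg hv]
    field_simp

lemma sig_eq (p : Idx α β) :
    sig α β μ₂ p = μ₂ ^ (l2 α β) * α ^ (p.1.val * l2 α β) := by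
  rw [sig, c21, mul_pow, pow_mul]

lemma sep [NeZero (l1 α β)] [NeZero (l2 α β)] (hα : α ≠ 0) (hβ : β ≠ 0)
    (hμ₁ : μ₁ ≠ 0) (hμ₂ : μ₂ ≠ 0) (hμ₃ : μ₃ ≠ 0)
    (h2 : (α⁻¹ * β) ^ l2 α β = 1) (hn1 : 2 ≤ l1 α β)
    (p q : Idx α β)
    (hlam : lam α β μ₂ μ₃ p = lam α β μ₂ μ₃ q)
    (hnu : nuf α β μ₁ μ₃ p = nuf α β μ₁ μ₃ q)
    (hsig : sig α β μ₂ p = sig α β μ₂ q) : p = q := by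
  have hαβ : α⁻¹ * β ≠ 0 := mul_ne_zero (inv_ne_zero hα) hβ
  set u := (α * β) ^ p.1.val with hu
  set u' := (α * β) ^ q.1.val with hu'
  set w := (α⁻¹ * β) ^ p.2.val with hw
  set w' := (α⁻¹ * β) ^ q.2.val with hw'
  -- from lam
  have hL : u * w = u' * w' := by
    have h := hlam
    rw [lam_eq hα hμ₂ h2 p, lam_eq hα hμ₂ h2 q] at h
    exact mul_left_cancel₀ (mul_ne_zero hμ₃ hαβ) h
  -- from nu
  have hN : w * (u - 1) = w' * (u' - 1) := by
    have h := hnu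
    rw [nuf_eq hμ₁ hn1 p, nuf_eq hμ₁ hn1 q] at h
    exact mul_left_cancel₀ (mul_ne_zero hμ₃ (inv_ne_zero hα)) h
  have hww : w = w' := by
    have : u * w - w * (u - 1) = u' * w' - w' * (u' - 1) := by rw [hL, hN]
    calc w = u * w - w * (u - 1) := by ring
    _ = u' * w' - w' * (u' - 1) := this
    _ = w' := by ring
  have hwne : w ≠ 0 := pow_ne_zero _ hαβ
  have huu : u = u' := by
    apply mul_right_cancel₀ hwne
    rw [hL, hww]
  -- second coordinates agree
  have hb : p.2 = q.2 := by
    have hVO : orderOf (α * β⁻¹) = orderOf (α⁻¹ * β) := by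
      rw [show α⁻¹ * β = (α * β⁻¹)⁻¹ by rw [mul_inv, inv_inv], orderOf_inv']
    have hval : p.2.val = q.2.val := by
      apply pow_inj_of_lt_orderOf hαβ _ _ (hww)
      · rw [← hVO]; exact ZMod.val_lt p.2
      · rw [← hVO]; exact ZMod.val_lt q.2
    rw [← cast_val p.2, ← cast_val q.2, hval]
  -- first coordinates agree
  have hS : α ^ (p.1.val * l2 α β) = α ^ (q.1.val * l2 α β) := by
    have h := hsig
    rw [sig_eq p, sig_eq q] at h
    exact mul_left_cancel₀ (pow_ne_zero _ hμ₂) h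
  have hBB : β ^ (p.1.val * l2 α β) = β ^ (q.1.val * l2 α β) := by
    have hAB : (α * β) ^ (p.1.val * l2 α β) = (α * β) ^ (q.1.val * l2 α β) := by
      rw [pow_mul, pow_mul, ← hu, ← hu', huu]
    rw [mul_pow, mul_pow, hS] at hAB
    exact mul_left_cancel₀ (pow_ne_zero _ hα) hAB
  have key : ∀ i j : ℕ, j ≤ i → i < l1 α β → j < l1 α β →
      (α * β) ^ i = (α * β) ^ j → β ^ (i * l2 α β) = β ^ (j * l2 α β) → i = j := by
    intro i j hij hi hj hab hbb
    have habne : α * β ≠ 0 := mul_ne_zero hα hβ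
    have h1 : (α * β) ^ j * (α * β) ^ (i - j) = (α * β) ^ j * 1 := by
      rw [← pow_add, Nat.add_sub_cancel' hij, mul_one, hab]
    have h2' : (α * β) ^ (i - j) = 1 := mul_left_cancel₀ (pow_ne_zero _ habne) h1
    have hdm := orderOf_dvd_of_pow_eq_one h2'
    have h3 : β ^ (j * l2 α β) * β ^ ((i - j) * l2 α β) = β ^ (j * l2 α β) * 1 := by
      rw [← pow_add, ← add_mul, Nat.add_sub_cancel' hij, mul_one, hbb]
    have h4 : β ^ ((i - j) * l2 α β) = 1 := mul_left_cancel₀ (pow_ne_zero _ hβ) h3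
    by_cases hc : orderOf β ∣ orderOf (α * β) * orderOf (α * β⁻¹)
    · have hl : l1 α β = orderOf (α * β) := by unfold l1; rw [if_pos hc]
      rcases Nat.eq_zero_or_pos (i - j) with h0 | hp
      · omega
      · have := Nat.le_of_dvd hp hdm; omega
    · have hl : l1 α β = 2 * orderOf (α * β) := by unfold l1; rw [if_neg hc]
      rcases Nat.eq_zero_or_pos (i - j) with h0 | hp
      · omega
      · obtain ⟨k, hk⟩ := hdm
        have hm : 0 < orderOf (α * β) := by omega
        have hk1 : k = 1 := by
          rcases Nat.lt_or_ge k 2 with hk2 | hk2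
          · interval_cases k <;> omega
          · exfalso
            have h5 : orderOf (α * β) * 2 ≤ orderOf (α * β) * k := Nat.mul_le_mul_left _ hk2
            have h6 : 2 * orderOf (α * β) ≤ i - j := by
              rw [hk, mul_comm 2 (orderOf (α * β))]
              exact h5
            omega
        rw [hk1, mul_one] at hk
        exfalso
        apply hc
        apply orderOf_dvd_of_pow_eq_one
        rw [← l2, ← hk]
        exact h4
  have ha : p.1 = q.1 := by
    have hval : p.1.val = q.1.val := by
      rcases le_total q.1.val p.1.val with hle | hle
      · exact key p.1.val q.1.val hle (ZMod.val_lt p.1) (ZMod.val_lt q.1) (by rw [← hu, ← hu', huu]) hBB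
      · exact (key q.1.val p.1.val hle (ZMod.val_lt q.1) (ZMod.val_lt p.1)
          (by rw [← hu, ← hu', huu]) hBB.symm).symm
    rw [← cast_val p.1, ← cast_val q.1, hval]
  exact Prod.ext ha hb

end Sep

/-- Theorem 5.2 of the paper. Let `K` be algebraically closed,
`α, β` roots of unity with `αβ ≠ 1`. For every `μ = (μ₁,μ₂,μ₃) ∈ (K*)³` the
stated formulas define a right `M₂(α,β)`-module structure on `V₂(μ)`, and
`V₂(μ)` is a simple `M₂(α,β)`-module of `K`-dimension `l₁·l₂`. -/

theorem stmt12 [IsAlgClosed K] (α β μ₁ μ₂ μ₃ : K)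
    (hα : α ≠ 0) (hβ : β ≠ 0) (hoα : 0 < orderOf α) (hoβ : 0 < orderOf β)
    (hab : α * β ≠ 1)
    (hμ₁ : μ₁ ≠ 0) (hμ₂ : μ₂ ≠ 0) (hμ₃ : μ₃ ≠ 0) :
    ∃ ρ : (QM α β)ᵐᵒᵖ →ₐ[K] Module.End K (V12 α β),
      IsV2Rep α β μ₁ μ₂ μ₃ ρ ∧
      ((⊥ : Submodule K (V12 α β)) ≠ ⊤) ∧
      (∀ W : Submodule K (V12 α β),
        (∀ x : (QM α β)ᵐᵒᵖ, ∀ w ∈ W, ρ x w ∈ W) → W = ⊥ ∨ W = ⊤) ∧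
      Module.finrank K (V12 α β) = l1 α β * l2 α β := by
  classical
  have hn2pos : 0 < l2 α β := l2_pos hβ hoα hoβ
  have hn1two : 2 ≤ l1 α β := l1_two hoα hoβ hab
  haveI : NeZero (l1 α β) := ⟨by omega⟩
  haveI : NeZero (l2 α β) := ⟨hn2pos.ne'⟩
  have h1 : (α * β) ^ l1 α β = 1 := h1_pow
  have h2 : (α⁻¹ * β) ^ l2 α β = 1 := h2_pow hα
  have h3a : α ^ (l1 α β * l2 α β) = 1 := h3a_pow hα
  have hrel : ∀ ⦃x y⦄, QMRel α β x y →
      phi α β μ₁ μ₂ μ₃ x = phi α β μ₁ μ₂ μ₃ y :=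
    phi_rel hα hβ hμ₁ hμ₂ h1 h2 h3a hn1two
  refine ⟨rho α β μ₁ μ₂ μ₃ hrel, ⟨?_, ?_, ?_, ?_⟩, ?_, ?_, ?_⟩
  · intro a b
    rw [rho_X11 hrel]
    show T11 α β μ₁ μ₃ (Pi.single (a, b) 1) = _
    rw [T11_single]
    rfl
  · intro a b
    rw [rho_X12 hrel]
    show T12 α β μ₂ μ₃ (Pi.single (a, b) 1) = _
    rw [T12_single]
    rfl
  · intro a b
    rw [rho_X21 hrel]
    show T21 α β μ₂ (Pi.single (a, b) 1) = _
    rw [T21_single]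
    rfl
  · intro a b
    rw [rho_X22 hrel]
    show T22 α β μ₁ (Pi.single (a, b) 1) = _
    rw [T22_single]
    rfl
  · exact bot_ne_top
  · -- simplicity
    intro W hW
    by_cases hbot : W = ⊥
    · exact Or.inl hbot
    refine Or.inr ?_
    have hT11 : ∀ f ∈ W, T11 α β μ₁ μ₃ f ∈ W := fun f hf => by
      have h := hW (op (X11 α β)) f hf; rwa [rho_X11 hrel] at h
    have hT12 : ∀ f ∈ W, T12 α β μ₂ μ₃ f ∈ W := fun f hf => by
      have h := hW (op (X12 α β)) f hf; rwa [rho_X12 hrel] at h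
    have hT21 : ∀ f ∈ W, T21 α β μ₂ f ∈ W := fun f hf => by
      have h := hW (op (X21 α β)) f hf; rwa [rho_X21 hrel] at h
    have hT22 : ∀ f ∈ W, T22 α β μ₁ f ∈ W := fun f hf => by
      have h := hW (op (X22 α β)) f hf; rwa [rho_X22 hrel] at h
    have hlamW : ∀ f ∈ W, (fun p => lam α β μ₂ μ₃ p * f p) ∈ W := by
      intro f hf
      have h := hT12 _ (hT21 f hf)
      convert h using 1
      funext p
      show lam α β μ₂ μ₃ p * f p = T12 α β μ₂ μ₃ (T21 α β μ₂ f) p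
      simp only [T12, T21, mshift_apply, lam]
      rw [add_sub_cancel_right]
      ring
    have hnuW : ∀ f ∈ W, (fun p => nuf α β μ₁ μ₃ p * f p) ∈ W := by
      intro f hf
      have h := hT22 _ (hT11 f hf)
      convert h using 1
      funext p
      show nuf α β μ₁ μ₃ p * f p = T22 α β μ₁ (T11 α β μ₁ μ₃ f) p
      simp only [T11, T22, mshift_apply, nuf]
      rw [sub_add_cancel]
      ring
    have hsigW : ∀ f ∈ W, (fun p => sig α β μ₂ p * f p) ∈ W := by
      have hiter : ∀ (k : ℕ) (f : V12 α β), f ∈ W →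
          (fun p : Idx α β => (c21 α β μ₂ p.1) ^ k *
            f (p.1, p.2 - (k : ZMod (l2 α β)))) ∈ W := by
        intro k
        induction k with
        | zero =>
          intro f hf
          convert hf using 1
          funext p
          simp
        | succ n ih =>
          intro f hf
          have h := hT21 _ (ih f hf)
          convert h using 1
          funext p
          show (c21 α β μ₂ p.1) ^ (n + 1) * f (p.1, p.2 - ((n + 1 : ℕ) : ZMod (l2 α β))) =
            T21 α β μ₂ (fun p : Idx α β =>
              (c21 α β μ₂ p.1) ^ n * f (p.1, p.2 - (n : ZMod (l2 α β)))) p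
          simp only [T21, mshift_apply]
          rw [pow_succ,
            show p.2 - ((n + 1 : ℕ) : ZMod (l2 α β)) = p.2 - 1 - (n : ZMod (l2 α β)) by
              push_cast; ring]
          ring
      intro f hf
      have h := hiter (l2 α β) f hf
      convert h using 1
      funext p
      rw [sig, ZMod.natCast_self, sub_zero]
    obtain ⟨f0, hf0W, hf0⟩ := (Submodule.ne_bot_iff W).mp hbot
    have hsep := fun p q => sep (μ₁ := μ₁) (μ₂ := μ₂) (μ₃ := μ₃) hα hβ hμ₁ hμ₂ hμ₃ h2 hn1two p q
    have key : ∀ (n : ℕ) (f : V12 α β), f ∈ W → f ≠ 0 →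
        (Finset.univ.filter (fun p => f p ≠ 0)).card ≤ n →
        ∃ p : Idx α β, (Pi.single p (1 : K) : V12 α β) ∈ W := by
      intro n
      induction n with
      | zero =>
        intro f hf hfne hcard
        exfalso
        obtain ⟨p, hp⟩ := Function.ne_iff.mp hfne
        have hmem : p ∈ Finset.univ.filter (fun p => f p ≠ 0) := by simpa using hp
        have := Finset.card_pos.mpr ⟨p, hmem⟩
        omega
      | succ n ih =>
        intro f hf hfne hcard
        obtain ⟨p, hp⟩ := Function.ne_iff.mp hfne
        have hp' : f p ≠ 0 := by simpa using hp
        by_cases hone : ∀ q : Idx α β, f q ≠ 0 → q = p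
        · refine ⟨p, ?_⟩
          have hfp : (f p)⁻¹ • f = Pi.single p (1 : K) := by
            funext q
            simp only [Pi.smul_apply, smul_eq_mul, Pi.single_apply]
            by_cases hq : q = p
            · subst hq; rw [if_pos rfl, inv_mul_cancel₀ hp']
            · rw [if_neg hq]
              rcases eq_or_ne (f q) 0 with h0 | h0
              · rw [h0, mul_zero]
              · exact absurd (hone q h0) hq
          rw [← hfp]
          exact W.smul_mem _ hf
        · push_neg at hone
          obtain ⟨q, hq, hqp⟩ := hone
          have hd : ∃ d : Idx α β → K,
              (∀ g ∈ W, (fun r => d r * g r) ∈ W) ∧ d p ≠ d q := by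
            by_contra hcon
            push_neg at hcon
            have e1 := hcon (lam α β μ₂ μ₃) hlamW
            have e2 := hcon (nuf α β μ₁ μ₃) hnuW
            have e3 := hcon (sig α β μ₂) hsigW
            exact hqp (hsep p q e1 e2 e3).symm
          obtain ⟨d, hdW, hdpq⟩ := hd
          set g : V12 α β := fun r => (d r - d q) * f r with hg
          have hgW : g ∈ W := by
            have hd1 := hdW f hf
            have hd2 := W.smul_mem (d q) hf
            have hd3 := W.sub_mem hd1 hd2
            convert hd3 using 1
            funext r
            simp only [hg, Pi.sub_apply, Pi.smul_apply, smul_eq_mul]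
            ring
          have hgp : g p ≠ 0 := mul_ne_zero (sub_ne_zero.mpr hdpq) hp'
          have hgne : g ≠ 0 := fun h0 => hgp (by rw [h0]; rfl)
          apply ih g hgW hgne
          have hsub : Finset.univ.filter (fun r => g r ≠ 0) ⊆
              (Finset.univ.filter (fun r => f r ≠ 0)).erase q := by
            intro r hr
            simp only [Finset.mem_filter, Finset.mem_univ, true_and] at hr
            rw [Finset.mem_erase]
            refine ⟨?_, ?_⟩
            · intro hrq
              subst hrq
              exact hr (by show (d r - d r) * f r = 0; rw [sub_self, zero_mul])
            · simp only [Finset.mem_filter, Finset.mem_univ, true_and]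
              intro hfr
              exact hr (by show (d r - d q) * f r = 0; rw [hfr, mul_zero])
          have hqmem : q ∈ Finset.univ.filter (fun r => f r ≠ 0) := by simpa using hq
          have hcle := Finset.card_le_card hsub
          rw [Finset.card_erase_of_mem hqmem] at hcle
          omega
    obtain ⟨p0, hp0⟩ := key _ f0 hf0W hf0 le_rfl
    -- generation
    have hbstep : ∀ (a : ZMod (l1 α β)) (b : ZMod (l2 α β)),
        (Pi.single (a, b) (1 : K) : V12 α β) ∈ W →
        (Pi.single (a, b + 1) (1 : K) : V12 α β) ∈ W := by
      intro a b hab'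
      have h := hT21 _ hab'
      rw [T21_single] at h
      have hc : c21 α β μ₂ a ≠ 0 := mul_ne_zero hμ₂ (pow_ne_zero _ hα)
      have h' := W.smul_mem (c21 α β μ₂ a)⁻¹ h
      rwa [smul_smul, inv_mul_cancel₀ hc, one_smul] at h'
    have hastep : ∀ (a : ZMod (l1 α β)) (b : ZMod (l2 α β)),
        (Pi.single (a, b) (1 : K) : V12 α β) ∈ W →
        (Pi.single (a + 1, b) (1 : K) : V12 α β) ∈ W := by
      intro a b hab'
      have h := hT22 _ hab'
      rw [T22_single] at h
      have hc : c22 α β μ₁ a b ≠ 0 := by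
        rw [c22]
        split_ifs
        · exact mul_ne_zero hμ₁ (inv_ne_zero (pow_ne_zero _ hα))
        · exact hμ₁
      have h' := W.smul_mem (c22 α β μ₁ a b)⁻¹ h
      rwa [smul_smul, inv_mul_cancel₀ hc, one_smul] at h'
    have hbs : ∀ (a : ZMod (l1 α β)) (b : ZMod (l2 α β)) (k : ℕ),
        (Pi.single (a, b) (1 : K) : V12 α β) ∈ W →
        (Pi.single (a, b + (k : ZMod (l2 α β))) (1 : K) : V12 α β) ∈ W := by
      intro a b k
      induction k with
      | zero => intro h; simpa using h
      | succ n ihn =>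
        intro h
        have h' := hbstep _ _ (ihn h)
        rwa [show b + ((n + 1 : ℕ) : ZMod (l2 α β)) = b + (n : ZMod (l2 α β)) + 1 by
          push_cast; ring]
    have has : ∀ (a : ZMod (l1 α β)) (b : ZMod (l2 α β)) (k : ℕ),
        (Pi.single (a, b) (1 : K) : V12 α β) ∈ W →
        (Pi.single (a + (k : ZMod (l1 α β)), b) (1 : K) : V12 α β) ∈ W := by
      intro a b k
      induction k with
      | zero => intro h; simpa using h
      | succ n ihn =>
        intro h
        have h' := hastep _ _ (ihn h)
        rwa [show a + ((n + 1 : ℕ) : ZMod (l1 α β)) = a + (n : ZMod (l1 α β)) + 1 by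
          push_cast; ring]
    have hallsingle : ∀ p : Idx α β, (Pi.single p (1 : K) : V12 α β) ∈ W := by
      rintro ⟨a', b'⟩
      have h1' := hbs p0.1 p0.2 ((b' - p0.2).val) (by simpa using hp0)
      rw [cast_val, show p0.2 + (b' - p0.2) = b' by ring] at h1'
      have h2' := has p0.1 b' ((a' - p0.1).val) h1'
      rwa [cast_val, show p0.1 + (a' - p0.1) = a' by ring] at h2'
    rw [eq_top_iff]
    intro f _
    have hsum : ∑ p : Idx α β, (f p • (Pi.single p (1 : K) : V12 α β)) = f := by
      rw [← Finset.univ_sum_single f]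
      apply Finset.sum_congr rfl
      intro p _
      funext r
      simp only [Pi.smul_apply, smul_eq_mul, Pi.single_apply]
      by_cases hr : r = p
      · subst hr; simp
      · simp [hr]
    rw [← hsum]
    exact Submodule.sum_mem W (fun p _ => W.smul_mem _ (hallsingle p))
  · have hfr : Module.finrank K (V12 α β) =
        Fintype.card (ZMod (l1 α β) × ZMod (l2 α β)) := Module.finrank_pi K
    rw [hfr, Fintype.card_prod, ZMod.card, ZMod.card]
end
end

section
/- For every μ = (μ₁,μ₂) ∈ (K*)², the stated formulas define a right M₂(α,β)-module structure on V₃(μ), and V₃(μ) is a simple M₂(α,β)-module of K-dimension ord(αβ)·ord(αβ⁻¹). -/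
noncomputable section

open MulOpposite

variable {K : Type*} [Field K]

namespace Stmt13Aux

variable {K : Type*} [Field K]

/-- generic "weighted shift" operator -/
def mkOp {I : Type*} (c : I → K) (σ : I → I) : (I → K) →ₗ[K] (I → K) where
  toFun f := fun p => c p * f (σ p)
  map_add' f g := by funext p; simp [mul_add]
  map_smul' r f := by funext p; simp only [Pi.smul_apply, smul_eq_mul, RingHom.id_apply]; ring

@[simp] lemma mkOp_apply {I : Type*} (c : I → K) (σ : I → I) (f : I → K) (p : I) :
    mkOp c σ f p = c p * f (σ p) := rfl

lemma val_add_one_cases {N : ℕ} [NeZero N] (a : ZMod N) :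
    ((a + 1).val = a.val + 1 ∧ a.val + 1 < N) ∨ ((a + 1).val = 0 ∧ a.val + 1 = N) := by
  have hv : (a + 1).val = (a.val + 1) % N := by
    rw [ZMod.val_add, ZMod.val_one_eq_one_mod, Nat.add_mod_mod]
  have hlt := ZMod.val_lt a
  by_cases h : a.val + 1 < N
  · exact Or.inl ⟨by rw [hv, Nat.mod_eq_of_lt h], h⟩
  · have hN : a.val + 1 = N := by omega
    exact Or.inr ⟨by rw [hv, hN, Nat.mod_self], hN⟩

lemma pow_val_succ {N : ℕ} [NeZero N] {x : K} (hx : x ^ N = 1) (b : ZMod N) :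
    x ^ (b + 1).val = x ^ b.val * x := by
  rcases val_add_one_cases b with ⟨h1, _⟩ | ⟨h1, h2⟩
  · rw [h1, pow_succ]
  · rw [h1, pow_zero]
    have : x ^ (b.val + 1) = 1 := by rw [h2, hx]
    rw [pow_succ] at this
    exact this.symm

lemma val_sub_one {N : ℕ} [NeZero N] {a : ZMod N} (ha : a ≠ 0) :
    a.val = (a - 1).val + 1 := by
  have h0 : a.val ≠ 0 := fun h => ha ((ZMod.val_eq_zero a).mp h)
  have hlt := ZMod.val_lt a
  have hc : ((a.val - 1 : ℕ) : ZMod N) = a - 1 := by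
    have hA : ((a.val : ℕ) : ZMod N) = a := ZMod.natCast_rightInverse a
    rw [Nat.cast_sub (show 1 ≤ a.val by omega), Nat.cast_one, hA]
  have hlt2 : a.val - 1 < N := by omega
  rw [← hc, ZMod.val_cast_of_lt hlt2]
  omega

lemma pow_inj_of_lt_orderOf {x : K} (hx : x ≠ 0) {i j : ℕ}
    (hi : i < orderOf x) (hj : j < orderOf x) (h : x ^ i = x ^ j) : i = j := by
  wlog hle : i ≤ j generalizing i j
  · exact (this hj hi h.symm (by omega)).symm
  have hxi : x ^ i ≠ 0 := pow_ne_zero _ hx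
  have hone : x ^ (j - i) = 1 := by
    have : x ^ i * x ^ (j - i) = x ^ i * 1 := by
      rw [mul_one, ← pow_add]
      rw [show i + (j - i) = j by omega, h]
    exact mul_left_cancel₀ hxi this
  have hd := orderOf_dvd_of_pow_eq_one hone
  rcases Nat.eq_zero_or_pos (j - i) with h0 | hpos
  · omega
  · have := Nat.le_of_dvd hpos hd; omega
section Stmt13Ops

def T11 (α β μ₁ μ₂ : K) : Module.End K (V3 α β) :=
  mkOp (fun p => μ₂ * α⁻¹ * (α⁻¹ * β) ^ p.2.val * ((α * β) ^ (p.1 + 1).val - 1))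
    (fun p => (p.1 + 1, p.2))

def T12 (α β μ₁ μ₂ : K) : Module.End K (V3 α β) :=
  mkOp (fun p => μ₁⁻¹ * μ₂ * β ^ p.1.val * (α⁻¹ * β) ^ (p.2 + 1).val)
    (fun p => (p.1, p.2 + 1))

def T21 (α β μ₁ μ₂ : K) : Module.End K (V3 α β) :=
  mkOp (fun p => μ₁ * α ^ p.1.val) (fun p => (p.1, p.2 - 1))

def T22 (α β μ₁ μ₂ : K) : Module.End K (V3 α β) :=
  mkOp (fun p => if p.1 = 0 then (0 : K) else 1) (fun p => (p.1 - 1, p.2))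

variable {α β μ₁ μ₂ : K}
variable [NeZero (orderOf (α * β))] [NeZero (l2 α β)]
variable (hα : α ≠ 0) (hβ : β ≠ 0) (hμ₁ : μ₁ ≠ 0) (hμ₂ : μ₂ ≠ 0)
variable (hq : (α⁻¹ * β) ^ l2 α β = 1) (hl : (α * β) ^ orderOf (α * β) = 1)

include hα hβ hμ₁ hμ₂ hq hl

lemma rel1 : T11 α β μ₁ μ₂ * T12 α β μ₁ μ₂ = α • (T12 α β μ₁ μ₂ * T11 α β μ₁ μ₂) := by
  apply LinearMap.ext; intro f; funext p; obtain ⟨a, b⟩ := p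
  simp only [T11, T12, Module.End.mul_apply, LinearMap.smul_apply, mkOp_apply,
    Pi.smul_apply, smul_eq_mul]
  rw [pow_val_succ hq b]
  rcases val_add_one_cases a with ⟨h1, _⟩ | ⟨h1, _⟩
  · rw [h1]
    simp only [mul_pow, inv_pow]
    field_simp
    try rw [div_eq_div_iff (by simp [hα, hβ, hμ₁, hμ₂, pow_ne_zero]) (by simp [hα, hβ, hμ₁, hμ₂, pow_ne_zero])]
    try rw [div_eq_iff (by simp [hα, hβ, hμ₁, hμ₂, pow_ne_zero])]
    try rw [eq_div_iff (by simp [hα, hβ, hμ₁, hμ₂, pow_ne_zero])]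
    ring
  · rw [h1]
    simp

lemma rel2 : T11 α β μ₁ μ₂ * T21 α β μ₁ μ₂ = β • (T21 α β μ₁ μ₂ * T11 α β μ₁ μ₂) := by
  apply LinearMap.ext; intro f; funext p; obtain ⟨a, b⟩ := p
  simp only [T11, T21, Module.End.mul_apply, LinearMap.smul_apply, mkOp_apply,
    Pi.smul_apply, smul_eq_mul]
  have hb := pow_val_succ hq (b - 1)
  rw [sub_add_cancel] at hb
  rw [hb]
  rcases val_add_one_cases a with ⟨h1, _⟩ | ⟨h1, _⟩
  · rw [h1]
    simp only [mul_pow, inv_pow]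
    field_simp
    try rw [div_eq_div_iff (by simp [hα, hβ, hμ₁, hμ₂, pow_ne_zero]) (by simp [hα, hβ, hμ₁, hμ₂, pow_ne_zero])]
    try rw [div_eq_iff (by simp [hα, hβ, hμ₁, hμ₂, pow_ne_zero])]
    try rw [eq_div_iff (by simp [hα, hβ, hμ₁, hμ₂, pow_ne_zero])]
    ring
  · rw [h1]
    simp

lemma rel3 : T21 α β μ₁ μ₂ * T22 α β μ₁ μ₂ = α • (T22 α β μ₁ μ₂ * T21 α β μ₁ μ₂) := by
  apply LinearMap.ext; intro f; funext p; obtain ⟨a, b⟩ := p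
  simp only [T21, T22, Module.End.mul_apply, LinearMap.smul_apply, mkOp_apply,
    Pi.smul_apply, smul_eq_mul]
  by_cases h : a = 0
  · simp [h]
  · simp only [if_neg h]
    rw [val_sub_one h]
    ring

lemma rel4 : T12 α β μ₁ μ₂ * T22 α β μ₁ μ₂ = β • (T22 α β μ₁ μ₂ * T12 α β μ₁ μ₂) := by
  apply LinearMap.ext; intro f; funext p; obtain ⟨a, b⟩ := p
  simp only [T12, T22, Module.End.mul_apply, LinearMap.smul_apply, mkOp_apply,
    Pi.smul_apply, smul_eq_mul]
  by_cases h : a = 0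
  · simp [h]
  · simp only [if_neg h]
    rw [val_sub_one h]
    ring

lemma rel5 : T12 α β μ₁ μ₂ * T21 α β μ₁ μ₂ =
    (β * α⁻¹) • (T21 α β μ₁ μ₂ * T12 α β μ₁ μ₂) := by
  apply LinearMap.ext; intro f; funext p; obtain ⟨a, b⟩ := p
  simp only [T12, T21, Module.End.mul_apply, LinearMap.smul_apply, mkOp_apply,
    Pi.smul_apply, smul_eq_mul, add_sub_cancel_right, sub_add_cancel]
  rw [pow_val_succ hq b]
  field_simp

lemma rel6 (h1n : 1 < orderOf (α * β)) :
    T11 α β μ₁ μ₂ * T22 α β μ₁ μ₂ = T22 α β μ₁ μ₂ * T11 α β μ₁ μ₂ +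
      (β - α⁻¹) • (T21 α β μ₁ μ₂ * T12 α β μ₁ μ₂) := by
  apply LinearMap.ext; intro f; funext p; obtain ⟨a, b⟩ := p
  simp only [T11, T12, T21, T22, Module.End.mul_apply, LinearMap.smul_apply,
    LinearMap.add_apply, mkOp_apply, Pi.add_apply,
    Pi.smul_apply, smul_eq_mul, add_sub_cancel_right, sub_add_cancel]
  have hba : β - α⁻¹ = α⁻¹ * (α * β - 1) := by field_simp
  by_cases h2 : a + 1 = 0
  · have hkey := pow_val_succ hl a
    rw [h2, ZMod.val_zero, pow_zero] at hkey
    have hne : a ≠ 0 := by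
      intro h0
      rw [h0, zero_add] at h2
      have : (1 : ZMod (orderOf (α * β))).val = 1 := ZMod.val_one_eq_one_mod (orderOf (α * β)) ▸ Nat.mod_eq_of_lt h1n
      rw [h2, ZMod.val_zero] at this
      omega
    rw [if_pos h2, if_neg hne, pow_val_succ hl a, hba]
    have hm1 : μ₁ * μ₁⁻¹ = 1 := mul_inv_cancel₀ hμ₁
    linear_combination (μ₂ * α⁻¹ * (α⁻¹ * β) ^ b.val * f (a, b)) * hkey -
      (μ₂ * α⁻¹ * (α⁻¹ * β) ^ b.val * (α * β - 1) * (α * β) ^ a.val * f (a, b)) * hm1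
  · rw [if_neg h2, pow_val_succ hl a, hba]
    by_cases h0 : a = 0
    · rw [if_pos h0, h0, ZMod.val_zero]
      simp only [mul_pow, inv_pow]
      field_simp
      try rw [div_eq_div_iff (by simp [hα, hβ, hμ₁, hμ₂, pow_ne_zero]) (by simp [hα, hβ, hμ₁, hμ₂, pow_ne_zero])]
      try rw [div_eq_iff (by simp [hα, hβ, hμ₁, hμ₂, pow_ne_zero])]
      try rw [eq_div_iff (by simp [hα, hβ, hμ₁, hμ₂, pow_ne_zero])]
      ring
    · rw [if_neg h0]
      simp only [mul_pow, inv_pow]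
      field_simp
      try rw [div_eq_div_iff (by simp [hα, hβ, hμ₁, hμ₂, pow_ne_zero]) (by simp [hα, hβ, hμ₁, hμ₂, pow_ne_zero])]
      try rw [div_eq_iff (by simp [hα, hβ, hμ₁, hμ₂, pow_ne_zero])]
      try rw [eq_div_iff (by simp [hα, hβ, hμ₁, hμ₂, pow_ne_zero])]
      ring

end Stmt13Ops
section Part2

variable {α β μ₁ μ₂ : K}

lemma mkOp_single {I : Type*} [DecidableEq I] (c : I → K) (σ : I → I) (j j' : I)
    (hj : σ j' = j) (hinj : ∀ p, σ p = j → p = j') :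
    mkOp c σ (Pi.single j (1 : K)) = c j' • (Pi.single j' 1 : I → K) := by
  funext p
  simp only [mkOp_apply, Pi.smul_apply, smul_eq_mul, Pi.single_apply]
  by_cases hp : p = j'
  · subst hp; rw [if_pos hj, if_pos rfl]
  · rw [if_neg fun h => hp (hinj p h), if_neg hp, mul_zero, mul_zero]

variable [NeZero (orderOf (α * β))] [NeZero (l2 α β)]

lemma T11_e3 (a : ZMod (orderOf (α * β))) (b : ZMod (l2 α β)) :
    T11 α β μ₁ μ₂ (e3 α β a b) =
      (if a = 0 then 0 else μ₂ * α⁻¹ * (α⁻¹ * β) ^ b.val * ((α * β) ^ a.val - 1)) •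
        e3 α β (a - 1) b := by
  rw [e3, e3, T11, mkOp_single _ _ (a, b) (a - 1, b)
    (by simp [sub_add_cancel])
    (by rintro ⟨x, y⟩ h; rw [Prod.mk.injEq] at h ⊢; exact ⟨by rw [← h.1]; ring, h.2⟩)]
  congr 1
  simp only [sub_add_cancel]
  by_cases h0 : a = 0
  · simp [h0]
  · simp [h0]

lemma T12_e3 (a : ZMod (orderOf (α * β))) (b : ZMod (l2 α β)) :
    T12 α β μ₁ μ₂ (e3 α β a b) =
      (μ₁⁻¹ * μ₂ * β ^ a.val * (α⁻¹ * β) ^ b.val) • e3 α β a (b - 1) := by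
  rw [e3, e3, T12, mkOp_single _ _ (a, b) (a, b - 1)
    (by simp [sub_add_cancel])
    (by rintro ⟨x, y⟩ h; rw [Prod.mk.injEq] at h ⊢; exact ⟨h.1, by rw [← h.2]; ring⟩)]
  congr 2
  rw [sub_add_cancel]

lemma T21_e3 (a : ZMod (orderOf (α * β))) (b : ZMod (l2 α β)) :
    T21 α β μ₁ μ₂ (e3 α β a b) = (μ₁ * α ^ a.val) • e3 α β a (b + 1) := by
  rw [e3, e3, T21, mkOp_single _ _ (a, b) (a, b + 1)
    (by simp [add_sub_cancel_right])
    (by rintro ⟨x, y⟩ h; rw [Prod.mk.injEq] at h ⊢; exact ⟨h.1, by rw [← h.2]; ring⟩)]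

lemma T22_e3 (h1n : 1 < orderOf (α * β)) (a : ZMod (orderOf (α * β))) (b : ZMod (l2 α β)) :
    T22 α β μ₁ μ₂ (e3 α β a b) =
      if a.val = orderOf (α * β) - 1 then 0 else e3 α β (a + 1) b := by
  have hiff : a + 1 = 0 ↔ a.val = orderOf (α * β) - 1 := by
    rcases val_add_one_cases a with ⟨h1, h2⟩ | ⟨h1, h2⟩
    · constructor
      · intro h; rw [h, ZMod.val_zero] at h1; omega
      · intro h; omega
    · constructor
      · intro _; omega
      · intro _; rw [← ZMod.val_eq_zero]; exact h1
  rw [e3, T22, mkOp_single _ _ (a, b) (a + 1, b)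
    (by simp [add_sub_cancel_right])
    (by rintro ⟨x, y⟩ h; rw [Prod.mk.injEq] at h ⊢; exact ⟨by rw [← h.1]; ring, h.2⟩)]
  by_cases h : a.val = orderOf (α * β) - 1
  · rw [if_pos h, if_pos (hiff.mpr h), zero_smul]
  · rw [if_neg h, if_neg fun hc => h (hiff.mp hc), one_smul, e3]

end Part2

section Part3

variable (α β μ₁ μ₂ : K)

def gen : Fin 4 → (Module.End K (V3 α β))ᵐᵒᵖ := fun i =>
  match i with
  | 0 => op (T11 α β μ₁ μ₂)
  | 1 => op (T12 α β μ₁ μ₂)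
  | 2 => op (T21 α β μ₁ μ₂)
  | 3 => op (T22 α β μ₁ μ₂)

def phi0 : FreeAlgebra K (Fin 4) →ₐ[K] (Module.End K (V3 α β))ᵐᵒᵖ :=
  FreeAlgebra.lift K (gen α β μ₁ μ₂)

variable {α β μ₁ μ₂}
variable [NeZero (orderOf (α * β))] [NeZero (l2 α β)]
variable (hα : α ≠ 0) (hβ : β ≠ 0) (hμ₁ : μ₁ ≠ 0) (hμ₂ : μ₂ ≠ 0)
variable (hq : (α⁻¹ * β) ^ l2 α β = 1) (hl : (α * β) ^ orderOf (α * β) = 1)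
variable (h1n : 1 < orderOf (α * β))

include hα hβ hμ₁ hμ₂ hq hl h1n in
lemma phi0_rel : ∀ ⦃x y⦄, QMRel α β x y → phi0 α β μ₁ μ₂ x = phi0 α β μ₁ μ₂ y := by
  intro x y h
  cases h <;>
    simp only [phi0, map_mul, map_smul, map_add, FreeAlgebra.lift_ι_apply, gen] <;>
    rw [← op_mul, ← op_mul] <;>
    [skip; skip; skip; skip; skip;
      (rw [← op_mul, ← op_smul, ← op_add];
        exact congrArg op (rel6 hα hβ hμ₁ hμ₂ hq hl h1n))] <;>
    rw [← op_smul]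
  · exact congrArg op (rel1 hα hβ hμ₁ hμ₂ hq hl)
  · exact congrArg op (rel2 hα hβ hμ₁ hμ₂ hq hl)
  · exact congrArg op (rel3 hα hβ hμ₁ hμ₂ hq hl)
  · exact congrArg op (rel4 hα hβ hμ₁ hμ₂ hq hl)
  · exact congrArg op (rel5 hα hβ hμ₁ hμ₂ hq hl)

def phi : QM α β →ₐ[K] (Module.End K (V3 α β))ᵐᵒᵖ :=
  RingQuot.liftAlgHom K ⟨phi0 α β μ₁ μ₂, phi0_rel hα hβ hμ₁ hμ₂ hq hl h1n⟩

def rho : (QM α β)ᵐᵒᵖ →ₐ[K] Module.End K (V3 α β) where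
  toFun x := (phi hα hβ hμ₁ hμ₂ hq hl h1n (unop x)).unop
  map_one' := by simp
  map_mul' x y := by simp [unop_mul, map_mul]
  map_zero' := by simp
  map_add' x y := by simp [unop_add, map_add]
  commutes' r := by
    simp [MulOpposite.algebraMap_apply, AlgHom.commutes]

lemma rho_X11 : rho hα hβ hμ₁ hμ₂ hq hl h1n (op (X11 α β)) = T11 α β μ₁ μ₂ := by
  show (phi hα hβ hμ₁ hμ₂ hq hl h1n (unop (op (X11 α β)))).unop = _
  rw [unop_op, X11, phi, RingQuot.liftAlgHom_mkAlgHom_apply, phi0, FreeAlgebra.lift_ι_apply]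
  rfl

lemma rho_X12 : rho hα hβ hμ₁ hμ₂ hq hl h1n (op (X12 α β)) = T12 α β μ₁ μ₂ := by
  show (phi hα hβ hμ₁ hμ₂ hq hl h1n (unop (op (X12 α β)))).unop = _
  rw [unop_op, X12, phi, RingQuot.liftAlgHom_mkAlgHom_apply, phi0, FreeAlgebra.lift_ι_apply]
  rfl

lemma rho_X21 : rho hα hβ hμ₁ hμ₂ hq hl h1n (op (X21 α β)) = T21 α β μ₁ μ₂ := by
  show (phi hα hβ hμ₁ hμ₂ hq hl h1n (unop (op (X21 α β)))).unop = _
  rw [unop_op, X21, phi, RingQuot.liftAlgHom_mkAlgHom_apply, phi0, FreeAlgebra.lift_ι_apply]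
  rfl

lemma rho_X22 : rho hα hβ hμ₁ hμ₂ hq hl h1n (op (X22 α β)) = T22 α β μ₁ μ₂ := by
  show (phi hα hβ hμ₁ hμ₂ hq hl h1n (unop (op (X22 α β)))).unop = _
  rw [unop_op, X22, phi, RingQuot.liftAlgHom_mkAlgHom_apply, phi0, FreeAlgebra.lift_ι_apply]
  rfl

end Part3
section Part4

variable {α β μ₁ μ₂ : K}

def dval (α β μ₂ : K) [NeZero (l2 α β)] (p : ZMod (orderOf (α * β)) × ZMod (l2 α β)) : K :=
  μ₂ * (α * β) ^ p.1.val * (α⁻¹ * β) ^ (p.2 + 1).val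

def eval (α β μ₂ : K) [NeZero (l2 α β)] (p : ZMod (orderOf (α * β)) × ZMod (l2 α β)) : K :=
  μ₂ * α⁻¹ * (α⁻¹ * β) ^ p.2.val * ((α * β) ^ p.1.val * (α * β) - 1)

variable [NeZero (orderOf (α * β))] [NeZero (l2 α β)]
variable (hα : α ≠ 0) (hβ : β ≠ 0) (hμ₁ : μ₁ ≠ 0) (hμ₂ : μ₂ ≠ 0)
variable (hq : (α⁻¹ * β) ^ l2 α β = 1) (hl : (α * β) ^ orderOf (α * β) = 1)

include hα hβ hμ₁ hμ₂ in
lemma D_apply (w : V3 α β) :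
    T12 α β μ₁ μ₂ (T21 α β μ₁ μ₂ w) = fun p => dval α β μ₂ p * w p := by
  funext p; obtain ⟨x, y⟩ := p
  simp only [T12, T21, mkOp_apply, add_sub_cancel_right, dval]
  field_simp
  ring

include hl in
lemma E_apply (w : V3 α β) :
    T11 α β μ₁ μ₂ (T22 α β μ₁ μ₂ w) = fun p => eval α β μ₂ p * w p := by
  funext p; obtain ⟨x, y⟩ := p
  simp only [T11, T22, mkOp_apply, eval]
  rw [pow_val_succ hl x]
  by_cases h2 : x + 1 = 0
  · have hkey := pow_val_succ hl x
    rw [h2, ZMod.val_zero, pow_zero] at hkey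
    rw [if_pos h2, ← hkey]
    ring
  · rw [if_neg h2]
    ring

include hα hβ in
lemma q_pow_inj {i j : ℕ} (hi : i < l2 α β) (hj : j < l2 α β)
    (h : (α⁻¹ * β) ^ i = (α⁻¹ * β) ^ j) : i = j := by
  have hq0 : α * β⁻¹ ≠ 0 := mul_ne_zero hα (inv_ne_zero hβ)
  have hinv : (α⁻¹ * β)⁻¹ = α * β⁻¹ := by rw [mul_inv, inv_inv]
  have h2 : (α * β⁻¹) ^ i = (α * β⁻¹) ^ j := by
    rw [← hinv, inv_pow, inv_pow, h]
  exact pow_inj_of_lt_orderOf hq0 hi hj h2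

include hα hβ hμ₂ hq in
lemma sep {p p' : ZMod (orderOf (α * β)) × ZMod (l2 α β)}
    (hd : dval α β μ₂ p = dval α β μ₂ p') (he : eval α β μ₂ p = eval α β μ₂ p') :
    p = p' := by
  obtain ⟨x, y⟩ := p; obtain ⟨x', y'⟩ := p'
  have hq0 : α⁻¹ * β ≠ 0 := mul_ne_zero (inv_ne_zero hα) hβ
  have hl0 : α * β ≠ 0 := mul_ne_zero hα hβ
  rw [dval, dval] at hd
  simp only at hd
  rw [pow_val_succ hq y, pow_val_succ hq y'] at hd
  have h1 : (α * β) ^ x.val * (α⁻¹ * β) ^ y.val = (α * β) ^ x'.val * (α⁻¹ * β) ^ y'.val := by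
    have h1' : μ₂ * ((α * β) ^ x.val * (α⁻¹ * β) ^ y.val * (α⁻¹ * β)) =
        μ₂ * ((α * β) ^ x'.val * (α⁻¹ * β) ^ y'.val * (α⁻¹ * β)) := by linear_combination hd
    exact mul_right_cancel₀ hq0 (mul_left_cancel₀ hμ₂ h1')
  rw [eval, eval] at he
  simp only at he
  have h2 : (α⁻¹ * β) ^ y.val * ((α * β) ^ x.val * (α * β) - 1) =
      (α⁻¹ * β) ^ y'.val * ((α * β) ^ x'.val * (α * β) - 1) := by
    have h2' : (μ₂ * α⁻¹) * ((α⁻¹ * β) ^ y.val * ((α * β) ^ x.val * (α * β) - 1)) =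
        (μ₂ * α⁻¹) * ((α⁻¹ * β) ^ y'.val * ((α * β) ^ x'.val * (α * β) - 1)) := by
      linear_combination he
    exact mul_left_cancel₀ (mul_ne_zero hμ₂ (inv_ne_zero hα)) h2'
  have h3 : (α⁻¹ * β) ^ y.val = (α⁻¹ * β) ^ y'.val := by
    linear_combination (α * β) * h1 - h2
  have hy : y = y' := ZMod.val_injective _ (q_pow_inj hα hβ (ZMod.val_lt y) (ZMod.val_lt y') h3)
  subst hy
  have h4 : (α * β) ^ x.val = (α * β) ^ x'.val :=
    mul_right_cancel₀ (pow_ne_zero _ hq0) h1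
  have hx : x = x' :=
    ZMod.val_injective _ (pow_inj_of_lt_orderOf hl0 (ZMod.val_lt x) (ZMod.val_lt x') h4)
  rw [hx]

end Part4

end Stmt13Aux

/-- Theorem 5.3 of the paper. Let `K` be algebraically closed,
`α, β` roots of unity with `αβ ≠ 1`. For every `μ = (μ₁,μ₂) ∈ (K*)²` the stated
formulas define a right `M₂(α,β)`-module structure on `V₃(μ)`, and `V₃(μ)` is a
simple `M₂(α,β)`-module of `K`-dimension `ord(αβ)·ord(αβ⁻¹)`. -/
theorem stmt13 [IsAlgClosed K] (α β μ₁ μ₂ : K)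
    (hα : α ≠ 0) (hβ : β ≠ 0) (hoα : 0 < orderOf α) (hoβ : 0 < orderOf β)
    (hab : α * β ≠ 1)
    (hμ₁ : μ₁ ≠ 0) (hμ₂ : μ₂ ≠ 0) :
    ∃ ρ : (QM α β)ᵐᵒᵖ →ₐ[K] Module.End K (V3 α β),
      IsV3Rep α β μ₁ μ₂ ρ ∧
      ((⊥ : Submodule K (V3 α β)) ≠ ⊤) ∧
      (∀ W : Submodule K (V3 α β),
        (∀ x : (QM α β)ᵐᵒᵖ, ∀ w ∈ W, ρ x w ∈ W) → W = ⊥ ∨ W = ⊤) ∧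
      Module.finrank K (V3 α β) = orderOf (α * β) * orderOf (α * β⁻¹) := by
  classical
  have hfinα : IsOfFinOrder α := orderOf_pos_iff.mp hoα
  have hfinβ : IsOfFinOrder β := orderOf_pos_iff.mp hoβ
  have hfinl : IsOfFinOrder (α * β) := (Commute.all α β).isOfFinOrder_mul hfinα hfinβ
  have hfinq : IsOfFinOrder (α * β⁻¹) := by
    refine (Commute.all _ _).isOfFinOrder_mul hfinα ?_
    obtain ⟨k, hk, hk1⟩ := isOfFinOrder_iff_pow_eq_one.mp hfinβ
    exact isOfFinOrder_iff_pow_eq_one.mpr ⟨k, hk, by rw [inv_pow, hk1, inv_one]⟩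
  have hn : 0 < orderOf (α * β) := orderOf_pos_iff.mpr hfinl
  have hm : 0 < l2 α β := orderOf_pos_iff.mpr hfinq
  haveI : NeZero (orderOf (α * β)) := ⟨hn.ne'⟩
  haveI : NeZero (l2 α β) := ⟨hm.ne'⟩
  have h1n : 1 < orderOf (α * β) := by
    rcases Nat.lt_or_ge 1 (orderOf (α * β)) with h | h
    · exact h
    · have h1 : orderOf (α * β) = 1 := by omega
      exact absurd (orderOf_eq_one_iff.mp h1) hab
  have hl : (α * β) ^ orderOf (α * β) = 1 := pow_orderOf_eq_one _
  have hq : (α⁻¹ * β) ^ l2 α β = 1 := by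
    have h1 : (α * β⁻¹) ^ l2 α β = 1 := pow_orderOf_eq_one _
    have hinv : α⁻¹ * β = (α * β⁻¹)⁻¹ := by rw [mul_inv, inv_inv]
    rw [hinv, inv_pow, h1, inv_one]
  have hα' : α ≠ 0 := hα
  refine ⟨Stmt13Aux.rho hα hβ hμ₁ hμ₂ hq hl h1n, ⟨?_, ?_, ?_, ?_⟩, ?_, ?_, ?_⟩
  · intro a b
    rw [Stmt13Aux.rho_X11 hα hβ hμ₁ hμ₂ hq hl h1n, Stmt13Aux.T11_e3]
  · intro a b
    rw [Stmt13Aux.rho_X12 hα hβ hμ₁ hμ₂ hq hl h1n, Stmt13Aux.T12_e3]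
  · intro a b
    rw [Stmt13Aux.rho_X21 hα hβ hμ₁ hμ₂ hq hl h1n, Stmt13Aux.T21_e3]
  · intro a b
    rw [Stmt13Aux.rho_X22 hα hβ hμ₁ hμ₂ hq hl h1n, Stmt13Aux.T22_e3 h1n]
  · -- ⊥ ≠ ⊤
    intro hbt
    have he : e3 α β 0 0 ≠ 0 := by
      intro h
      have h2 := congrFun h (0, 0)
      simp [e3, Pi.single_apply] at h2
    apply he
    have htop : e3 α β 0 0 ∈ (⊤ : Submodule K (V3 α β)) := trivial
    rw [← hbt] at htop
    exact (Submodule.mem_bot K).mp htop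
  · -- simplicity
    intro W hWinv
    by_cases hWbot : W = ⊥
    · exact Or.inl hWbot
    right
    obtain ⟨w0, hw0W, hw00⟩ := (Submodule.ne_bot_iff W).mp hWbot
    have hT11 : ∀ w ∈ W, Stmt13Aux.T11 α β μ₁ μ₂ w ∈ W := fun w hw => by
      have h := hWinv (op (X11 α β)) w hw
      rwa [Stmt13Aux.rho_X11 hα hβ hμ₁ hμ₂ hq hl h1n] at h
    have hT12 : ∀ w ∈ W, Stmt13Aux.T12 α β μ₁ μ₂ w ∈ W := fun w hw => by
      have h := hWinv (op (X12 α β)) w hw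
      rwa [Stmt13Aux.rho_X12 hα hβ hμ₁ hμ₂ hq hl h1n] at h
    have hT21 : ∀ w ∈ W, Stmt13Aux.T21 α β μ₁ μ₂ w ∈ W := fun w hw => by
      have h := hWinv (op (X21 α β)) w hw
      rwa [Stmt13Aux.rho_X21 hα hβ hμ₁ hμ₂ hq hl h1n] at h
    have hT22 : ∀ w ∈ W, Stmt13Aux.T22 α β μ₁ μ₂ w ∈ W := fun w hw => by
      have h := hWinv (op (X22 α β)) w hw
      rwa [Stmt13Aux.rho_X22 hα hβ hμ₁ hμ₂ hq hl h1n] at h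
    have hq0 : α⁻¹ * β ≠ 0 := mul_ne_zero (inv_ne_zero hα) hβ
    have hl0 : α * β ≠ 0 := mul_ne_zero hα hβ
    -- Step 1: W contains a basis vector
    have key : ∀ k : ℕ, ∀ w ∈ W, w ≠ 0 →
        (Finset.univ.filter fun p => w p ≠ 0).card ≤ k → ∃ a b, e3 α β a b ∈ W := by
      intro k
      induction k with
      | zero =>
        intro w _ hw0 hcard
        exfalso
        obtain ⟨p, hp⟩ := Function.ne_iff.mp hw0
        simp only [Pi.zero_apply] at hp
        have hmem : p ∈ Finset.univ.filter fun p => w p ≠ 0 := by simp [hp]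
        have := Finset.card_pos.mpr ⟨p, hmem⟩
        omega
      | succ k ih =>
        intro w hwW hw0 hcard
        obtain ⟨p₀, hp₀⟩ := Function.ne_iff.mp hw0
        simp only [Pi.zero_apply] at hp₀
        by_cases hs : ∀ p, w p ≠ 0 → p = p₀
        · obtain ⟨a₀, b₀⟩ := p₀
          refine ⟨a₀, b₀, ?_⟩
          have hmem := W.smul_mem (w (a₀, b₀))⁻¹ hwW
          have h2 : (w (a₀, b₀))⁻¹ • w = e3 α β a₀ b₀ := by
            funext p
            simp only [Pi.smul_apply, smul_eq_mul, e3, Pi.single_apply]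
            by_cases hp : p = (a₀, b₀)
            · rw [if_pos hp, hp, inv_mul_cancel₀ hp₀]
            · rw [if_neg hp]
              have hwp : w p = 0 := by
                by_contra hne
                exact hp (hs p hne)
              rw [hwp, mul_zero]
          rwa [h2] at hmem
        · push_neg at hs
          obtain ⟨p₁, hp₁, hp₁0⟩ := hs
          have hDmem : ∀ u ∈ W, (fun p => Stmt13Aux.dval α β μ₂ p * u p) ∈ W := fun u hu => by
            have h := hT12 _ (hT21 u hu)
            rwa [Stmt13Aux.D_apply hα hβ hμ₁ hμ₂] at h
          have hEmem : ∀ u ∈ W, (fun p => Stmt13Aux.eval α β μ₂ p * u p) ∈ W := fun u hu => by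
            have h := hT11 _ (hT22 u hu)
            rwa [Stmt13Aux.E_apply hl] at h
          have hsep : Stmt13Aux.dval α β μ₂ p₀ ≠ Stmt13Aux.dval α β μ₂ p₁ ∨
              Stmt13Aux.eval α β μ₂ p₀ ≠ Stmt13Aux.eval α β μ₂ p₁ := by
            by_contra hc
            push_neg at hc
            exact hp₁0 (Stmt13Aux.sep hα hβ hμ₂ hq hc.1 hc.2).symm
          obtain ⟨g, hgW, hg⟩ : ∃ g : ZMod (orderOf (α * β)) × ZMod (l2 α β) → K,
              (∀ u ∈ W, (fun p => g p * u p) ∈ W) ∧ g p₀ ≠ g p₁ := by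
            rcases hsep with h | h
            exacts [⟨_, hDmem, h⟩, ⟨_, hEmem, h⟩]
          set w' : V3 α β := fun p => (g p - g p₁) * w p with hw'def
          have hw'W : w' ∈ W := by
            have h1 : (fun p => g p * w p) ∈ W := hgW w hwW
            have h2 : w' = (fun p => g p * w p) - g p₁ • w := by
              funext p
              simp only [hw'def, Pi.sub_apply, Pi.smul_apply, smul_eq_mul]
              ring
            rw [h2]
            exact W.sub_mem h1 (W.smul_mem _ hwW)
          have hw'0 : w' ≠ 0 := by
            intro h
            have h2 := congrFun h p₀
            simp only [hw'def, Pi.zero_apply] at h2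
            rcases mul_eq_zero.mp h2 with h3 | h3
            · exact hg (sub_eq_zero.mp h3)
            · exact hp₀ h3
          have hsub : (Finset.univ.filter fun p => w' p ≠ 0) ⊂
              Finset.univ.filter fun p => w p ≠ 0 := by
            rw [Finset.ssubset_iff_of_subset]
            · refine ⟨p₁, by simp [hp₁], by simp [hw'def]⟩
            · intro p hp
              simp only [Finset.mem_filter, Finset.mem_univ, true_and, hw'def] at hp ⊢
              intro hwp
              exact hp (by rw [hwp, mul_zero])
          have hcard' : (Finset.univ.filter fun p => w' p ≠ 0).card ≤ k := by
            have := Finset.card_lt_card hsub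
            omega
          exact ih w' hw'W hw'0 hcard'
    obtain ⟨a₀, b₀, hab₀⟩ := key _ w0 hw0W hw00 le_rfl
    -- Step 2: move down to row 0
    have step_down : ∀ k : ℕ, ∀ a : ZMod (orderOf (α * β)), a.val ≤ k →
        ∀ b, e3 α β a b ∈ W → e3 α β 0 b ∈ W := by
      intro k
      induction k with
      | zero =>
        intro a ha b hmem
        have h0 : a = 0 := by
          rw [← ZMod.val_eq_zero]
          omega
        rwa [h0] at hmem
      | succ k ih =>
        intro a ha b hmem
        by_cases h0 : a = 0
        · rwa [h0] at hmem
        · have hc : μ₂ * α⁻¹ * (α⁻¹ * β) ^ b.val * ((α * β) ^ a.val - 1) ≠ 0 := by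
            refine mul_ne_zero (mul_ne_zero (mul_ne_zero hμ₂ (inv_ne_zero hα))
              (pow_ne_zero _ hq0)) ?_
            intro hzero
            apply h0
            have h1 : (α * β) ^ a.val = (α * β) ^ 0 := by
              rw [pow_zero]
              exact sub_eq_zero.mp hzero
            have h2 := Stmt13Aux.pow_inj_of_lt_orderOf hl0 (ZMod.val_lt a) hn h1
            rw [← ZMod.val_eq_zero]
            exact h2
          have hmem2 : e3 α β (a - 1) b ∈ W := by
            have h := hT11 _ hmem
            rw [Stmt13Aux.T11_e3, if_neg h0] at h
            have heq : e3 α β (a - 1) b =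
                (μ₂ * α⁻¹ * (α⁻¹ * β) ^ b.val * ((α * β) ^ a.val - 1))⁻¹ •
                  ((μ₂ * α⁻¹ * (α⁻¹ * β) ^ b.val * ((α * β) ^ a.val - 1)) •
                    e3 α β (a - 1) b) := by
              rw [smul_smul, inv_mul_cancel₀ hc, one_smul]
            rw [heq]
            exact W.smul_mem _ h
          refine ih (a - 1) ?_ b hmem2
          have := Stmt13Aux.val_sub_one h0
          omega
    have h0b₀ : e3 α β 0 b₀ ∈ W := step_down a₀.val a₀ le_rfl b₀ hab₀
    -- Step 3: all of row 0
    have step_side : ∀ b, e3 α β 0 b ∈ W := by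
      have hstep : ∀ b, e3 α β 0 b ∈ W → e3 α β 0 (b + 1) ∈ W := by
        intro b hmem
        have h := hT21 _ hmem
        rw [Stmt13Aux.T21_e3] at h
        have hc : μ₁ * α ^ (0 : ZMod (orderOf (α * β))).val ≠ 0 :=
          mul_ne_zero hμ₁ (pow_ne_zero _ hα)
        have heq : e3 α β 0 (b + 1) =
            (μ₁ * α ^ (0 : ZMod (orderOf (α * β))).val)⁻¹ •
              ((μ₁ * α ^ (0 : ZMod (orderOf (α * β))).val) • e3 α β 0 (b + 1)) := by
          rw [smul_smul, inv_mul_cancel₀ hc, one_smul]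
        rw [heq]
        exact W.smul_mem _ h
      have hall : ∀ k : ℕ, e3 α β 0 (b₀ + (k : ZMod (l2 α β))) ∈ W := by
        intro k
        induction k with
        | zero => simpa using h0b₀
        | succ k ih =>
          have h := hstep _ ih
          have hcast : b₀ + ((k + 1 : ℕ) : ZMod (l2 α β)) =
              b₀ + (k : ZMod (l2 α β)) + 1 := by
            push_cast
            ring
          rwa [hcast]
      intro b
      have h := hall (b - b₀).val
      have h2 : b₀ + (((b - b₀).val : ℕ) : ZMod (l2 α β)) = b := by
        rw [ZMod.natCast_rightInverse (b - b₀)]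
        ring
      rwa [h2] at h
    -- Step 4: climb up
    have step_up : ∀ b, ∀ k : ℕ, k < orderOf (α * β) →
        e3 α β (k : ZMod (orderOf (α * β))) b ∈ W := by
      intro b k
      induction k with
      | zero =>
        intro _
        simpa using step_side b
      | succ k ih =>
        intro hk
        have hkW := ih (by omega)
        have h := hT22 _ hkW
        rw [Stmt13Aux.T22_e3 h1n] at h
        have hval : ((k : ZMod (orderOf (α * β)))).val = k := ZMod.val_cast_of_lt (by omega)
        rw [hval, if_neg (by omega)] at h
        have hcast : ((k + 1 : ℕ) : ZMod (orderOf (α * β))) =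
            (k : ZMod (orderOf (α * β))) + 1 := by
          push_cast
          ring
        rwa [hcast]
    have hbasis : ∀ p : ZMod (orderOf (α * β)) × ZMod (l2 α β),
        Pi.single p (1 : K) ∈ W := by
      rintro ⟨a, b⟩
      have h := step_up b a.val (ZMod.val_lt a)
      rw [ZMod.natCast_rightInverse a] at h
      exact h
    rw [eq_top_iff]
    intro w _
    have hw_rep : w = ∑ p : ZMod (orderOf (α * β)) × ZMod (l2 α β),
        w p • (Pi.single p (1 : K) : V3 α β) := by
      funext p'
      rw [Finset.sum_apply]
      simp [Pi.single_apply]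
    rw [hw_rep]
    exact Submodule.sum_mem _ fun p _ => W.smul_mem _ (hbasis p)
  · -- dimension
    have h1 : Module.finrank K (V3 α β) =
        Fintype.card (ZMod (orderOf (α * β)) × ZMod (l2 α β)) :=
      Module.finrank_fintype_fun_eq_card K
    rw [h1, Fintype.card_prod, ZMod.card, ZMod.card]
    rfl
end
end
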